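/- arXiv:2603.26059 — 3 statements merged into one kernel-verified Lean document; each statement's English description precedes it below -/
import Mathlib

section
/- The matrix Q is orthogonal and satisfies Q^T A Q = diag(1, α, …, α) and Q^T B Q = diag(1, β, …, β) (each with m−1 repeated entries after the first). The matrix P is orthogonal and, writing D₁ = diag(1, γ, …, γ) and D₂ = diag(0, δ, …, δ) for the m×m diagonal matrices with m−1 repeated entries after the first, one has P^T H_odd P = [[D₁, D₂], [D₁, D₂]], P^T H_even P = [[D₁, −D₂], [−D₁, D₂]], and consequently, for H = (H_odd + H_even)/2, P^T H P = diag(1, γ, …, γ, 0, δ, …, δ); in particular P diagonalizes H. -/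
open Matrix

noncomputable section

attribute [local instance] Classical.propDecidable

namespace Dipole

/-- the matrix `A = α I_m + ((1−α)/m) J` -/
def Amat (m : ℕ) (α : ℝ) : Matrix (Fin m) (Fin m) ℝ :=
  α • (1 : Matrix (Fin m) (Fin m) ℝ) + ((1 - α) / m) • Matrix.of fun _ _ => (1 : ℝ)

/-- the matrix `B = β I_m + ((1−β)/m) J` -/
def Bmat (m : ℕ) (β : ℝ) : Matrix (Fin m) (Fin m) ℝ :=
  β • (1 : Matrix (Fin m) (Fin m) ℝ) + ((1 - β) / m) • Matrix.of fun _ _ => (1 : ℝ)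

/-- the block matrix `H_odd = [[A, B], [0, 0]]` -/
def Hodd (m : ℕ) (α β : ℝ) : Matrix (Fin m ⊕ Fin m) (Fin m ⊕ Fin m) ℝ :=
  fromBlocks (Amat m α) (Bmat m β) 0 0

/-- the block matrix `H_even = [[0, 0], [B, A]]` -/
def Heven (m : ℕ) (α β : ℝ) : Matrix (Fin m ⊕ Fin m) (Fin m ⊕ Fin m) ℝ :=
  fromBlocks 0 0 (Bmat m β) (Amat m α)

/-- the orthogonal matrix `Q = (u, w_1, …, w_{m−1})` with `u = (1/√m)(1,…,1)ᵀ` and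
`w_r = (1/√(r(r+1)))(1,…,1,−r,0,…,0)ᵀ` (`r` leading ones) -/
def Qmat (m : ℕ) : Matrix (Fin m) (Fin m) ℝ :=
  Matrix.of fun i j =>
    if (j : ℕ) = 0 then (Real.sqrt m)⁻¹
    else if (i : ℕ) < (j : ℕ) then (Real.sqrt ((j : ℕ) * ((j : ℕ) + 1 : ℕ)))⁻¹
    else if (i : ℕ) = (j : ℕ) then
      -(((j : ℕ) : ℝ)) * (Real.sqrt ((j : ℕ) * ((j : ℕ) + 1 : ℕ)))⁻¹
    else 0

/-- the orthogonal matrix `P = (1/√2) [[Q, Q], [Q, −Q]]` -/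
def Pmat (m : ℕ) : Matrix (Fin m ⊕ Fin m) (Fin m ⊕ Fin m) ℝ :=
  (Real.sqrt 2)⁻¹ • fromBlocks (Qmat m) (Qmat m) (Qmat m) (-(Qmat m))

/-- `H_n = H_odd` for odd `n`, `H_even` for even `n` -/
def Hn (m : ℕ) (α β : ℝ) (n : ℕ) : Matrix (Fin m ⊕ Fin m) (Fin m ⊕ Fin m) ℝ :=
  if Odd n then Hodd m α β else Heven m α β

/-- `Π_{k,l} = (I + H_{k+1}/k) ⋯ (I + H_{l+1}/l)` for `k ≥ l`, and `Π_{k,l} = I` for `k < l` -/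
def Pimat (m : ℕ) (α β : ℝ) (l : ℕ) : ℕ → Matrix (Fin m ⊕ Fin m) (Fin m ⊕ Fin m) ℝ
  | 0 => 1
  | k + 1 =>
      if k + 1 < l then 1
      else ((1 : Matrix (Fin m ⊕ Fin m) (Fin m ⊕ Fin m) ℝ) +
        ((k : ℝ) + 1)⁻¹ • Hn m α β (k + 2)) * Pimat m α β l k

/-- `λ_{k,l}(c) = ∏_{i=l}^{k} (2i−1+2c)/(2i−1)` -/
def lam (l k : ℕ) (c : ℝ) : ℝ :=
  ∏ i ∈ Finset.Icc l k, (2 * (i : ℝ) - 1 + 2 * c) / (2 * (i : ℝ) - 1)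

/-- `ρ = max{0, γ, δ}` with `γ = (α+β)/2`, `δ = (α−β)/2` -/
def rho (α β : ℝ) : ℝ := max 0 (max ((α + β) / 2) ((α - β) / 2))

/-- the `ℓ²`-operator norm of a square real matrix -/
def opNorm {ι : Type*} [Fintype ι] [DecidableEq ι] (M : Matrix ι ι ℝ) : ℝ :=
  ‖Matrix.toEuclideanCLM (𝕜 := ℝ) M‖

/-- the submatrix obtained by deleting the first row and the first column
(rows and columns `2` through `2m`) -/
def lowerSub (m : ℕ) [NeZero m] (M : Matrix (Fin m ⊕ Fin m) (Fin m ⊕ Fin m) ℝ) :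
    Matrix {i : Fin m ⊕ Fin m // i ≠ Sum.inl 0} {i : Fin m ⊕ Fin m // i ≠ Sum.inl 0} ℝ :=
  M.submatrix Subtype.val Subtype.val

end Dipole
namespace DipoleAux
open Dipole

lemma sum_piece (m j : ℕ) (hj : j < m) (a b : ℝ) :
    ∑ n ∈ Finset.range m, (if n < j then a else if n = j then b else (0:ℝ)) = j * a + b := by
  rw [← Finset.sum_range_add_sum_Ico _ (Nat.succ_le_of_lt hj)]
  rw [Finset.sum_range_succ]
  have h1 : ∑ n ∈ Finset.range j, (if n < j then a else if n = j then b else (0:ℝ)) = j * a := by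
    have : ∀ n ∈ Finset.range j, (if n < j then a else if n = j then b else (0:ℝ)) = a := by
      intro n hn; simp [Finset.mem_range.mp hn]
    rw [Finset.sum_congr rfl this, Finset.sum_const, Finset.card_range, nsmul_eq_mul]
  have h2 : ∑ n ∈ Finset.Ico (j+1) m, (if n < j then a else if n = j then b else (0:ℝ)) = 0 := by
    apply Finset.sum_eq_zero
    intro n hn
    have := (Finset.mem_Ico.mp hn).1
    have h3 : ¬ n < j := by omega
    have h4 : n ≠ j := by omega
    simp [h3, h4]
  rw [h1, h2]
  simp

noncomputable def qent (m j n : ℕ) : ℝ :=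
  if j = 0 then (Real.sqrt m)⁻¹
  else if n < j then (Real.sqrt (j * (j + 1)))⁻¹
  else if n = j then -(j:ℝ) * (Real.sqrt (j * (j + 1)))⁻¹
  else 0

lemma sqs (j : ℕ) : Real.sqrt (j * (j+1)) * Real.sqrt (j * (j+1)) = j * (j+1) := by
  rw [Real.mul_self_sqrt (by positivity)]

lemma dot (m j k : ℕ) (hj : j < m) (hk : k < m) (hjk : j ≤ k) :
    ∑ n ∈ Finset.range m, qent m j n * qent m k n = if j = k then 1 else 0 := by
  rcases Nat.eq_zero_or_pos k with hk0 | hk0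
  · subst hk0
    have hj0 : j = 0 := Nat.le_zero.mp hjk
    subst hj0
    have hq : ∀ n, qent m 0 n = (Real.sqrt m)⁻¹ := fun n => by simp [qent]
    have hrw : (∑ n ∈ Finset.range m, qent m 0 n * qent m 0 n)
        = ∑ _n ∈ Finset.range m, (Real.sqrt m)⁻¹ * (Real.sqrt m)⁻¹ :=
      Finset.sum_congr rfl (fun n _ => by rw [hq])
    rw [hrw, Finset.sum_const, Finset.card_range, nsmul_eq_mul, if_pos rfl]
    have hm : (0:ℝ) < m := by exact_mod_cast hj
    have hs : Real.sqrt m * Real.sqrt m = m := Real.mul_self_sqrt (le_of_lt hm)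
    rw [← mul_inv, hs]
    exact mul_inv_cancel₀ (ne_of_gt hm)
  · have hkne : k ≠ 0 := by omega
    rcases Nat.eq_zero_or_pos j with hj0 | hj0
    · subst hj0
      have hne : (0:ℕ) ≠ k := by omega
      rw [if_neg hne]
      have : ∀ n ∈ Finset.range m, qent m 0 n * qent m k n =
          (if n < k then (Real.sqrt m)⁻¹ * (Real.sqrt (k*(k+1)))⁻¹
           else if n = k then (Real.sqrt m)⁻¹ * (-(k:ℝ) * (Real.sqrt (k*(k+1)))⁻¹) else 0) := by
        intro n _
        simp only [qent, if_pos rfl, if_neg hkne]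
        split_ifs <;> first | (exfalso; omega) | ring
      rw [Finset.sum_congr rfl this, sum_piece m k hk]
      ring
    · have hjne : j ≠ 0 := by omega
      rcases eq_or_lt_of_le hjk with heq | hlt
      · subst heq
        rw [if_pos rfl]
        have : ∀ n ∈ Finset.range m, qent m j n * qent m j n =
            (if n < j then (Real.sqrt (j*(j+1)))⁻¹ * (Real.sqrt (j*(j+1)))⁻¹
             else if n = j then (-(j:ℝ) * (Real.sqrt (j*(j+1)))⁻¹) * (-(j:ℝ) * (Real.sqrt (j*(j+1)))⁻¹) else 0) := by
          intro n _
          simp only [qent, if_neg hjne]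
          split_ifs <;> first | (exfalso; omega) | ring
        rw [Finset.sum_congr rfl this, sum_piece m j hj]
        have hss : (Real.sqrt (j*(j+1)))⁻¹ * (Real.sqrt (j*(j+1)))⁻¹ = ((j:ℝ) * ((j:ℝ)+1))⁻¹ := by
          rw [← mul_inv, sqs j]
        have hjR : (0:ℝ) < j := by exact_mod_cast hj0
        calc (j:ℝ) * ((Real.sqrt (j*(j+1)))⁻¹ * (Real.sqrt (j*(j+1)))⁻¹)
              + (-(j:ℝ) * (Real.sqrt (j*(j+1)))⁻¹) * (-(j:ℝ) * (Real.sqrt (j*(j+1)))⁻¹)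
            = ((j:ℝ) + (j:ℝ)*(j:ℝ)) * ((Real.sqrt (j*(j+1)))⁻¹ * (Real.sqrt (j*(j+1)))⁻¹) := by ring
          _ = ((j:ℝ) + (j:ℝ)*(j:ℝ)) * ((j:ℝ)*((j:ℝ)+1))⁻¹ := by rw [hss]
          _ = 1 := by field_simp; ring
      · have hne : j ≠ k := by omega
        rw [if_neg hne]
        have : ∀ n ∈ Finset.range m, qent m j n * qent m k n =
            (if n < j then (Real.sqrt (j*(j+1)))⁻¹ * (Real.sqrt (k*(k+1)))⁻¹
             else if n = j then (-(j:ℝ) * (Real.sqrt (j*(j+1)))⁻¹) * (Real.sqrt (k*(k+1)))⁻¹ else 0) := by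
          intro n _
          simp only [qent, if_neg hjne, if_neg hkne]
          split_ifs <;> first | (exfalso; omega) | ring
        rw [Finset.sum_congr rfl this, sum_piece m j hj]
        ring

lemma colsum (m j : ℕ) (hj : j < m) :
    ∑ n ∈ Finset.range m, qent m j n = if j = 0 then Real.sqrt m else 0 := by
  rcases Nat.eq_zero_or_pos j with hj0 | hj0
  · subst hj0
    have hq : ∀ n, qent m 0 n = (Real.sqrt m)⁻¹ := fun n => by simp [qent]
    have hrw : (∑ n ∈ Finset.range m, qent m 0 n)
        = ∑ _n ∈ Finset.range m, (Real.sqrt m)⁻¹ :=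
      Finset.sum_congr rfl (fun n _ => by rw [hq])
    rw [hrw, Finset.sum_const, Finset.card_range, nsmul_eq_mul, if_pos rfl]
    have hm : (0:ℝ) < m := by exact_mod_cast hj
    have hs : Real.sqrt m * Real.sqrt m = m := Real.mul_self_sqrt (le_of_lt hm)
    have hsne : Real.sqrt m ≠ 0 := by positivity
    calc (m:ℝ) * (Real.sqrt m)⁻¹ = (Real.sqrt m * Real.sqrt m) * (Real.sqrt m)⁻¹ := by rw [hs]
      _ = Real.sqrt m := by field_simp
  · have hjne : j ≠ 0 := by omega
    rw [if_neg hjne]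
    have : ∀ n ∈ Finset.range m, qent m j n =
        (if n < j then (Real.sqrt (j*(j+1)))⁻¹
         else if n = j then -(j:ℝ) * (Real.sqrt (j*(j+1)))⁻¹ else 0) := by
      intro n _
      simp only [qent, if_neg hjne]
    rw [Finset.sum_congr rfl this, sum_piece m j hj]
    ring

lemma Qmat_eq (m : ℕ) (i j : Fin m) : Dipole.Qmat m i j = qent m j i := by
  simp only [Dipole.Qmat, qent, Matrix.of_apply]
  norm_cast

lemma QtQ (m : ℕ) : (Dipole.Qmat m)ᵀ * Dipole.Qmat m = 1 := by
  ext j k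
  rw [Matrix.mul_apply]
  have hrw : (∑ i : Fin m, (Dipole.Qmat m)ᵀ j i * Dipole.Qmat m i k)
      = ∑ n ∈ Finset.range m, qent m j n * qent m k n := by
    rw [← Fin.sum_univ_eq_sum_range (fun n => qent m j n * qent m k n) m]
    exact Finset.sum_congr rfl (fun i _ => by rw [Matrix.transpose_apply, Qmat_eq, Qmat_eq])
  rw [hrw]
  have hone : (1 : Matrix (Fin m) (Fin m) ℝ) j k = if (j:ℕ) = (k:ℕ) then 1 else 0 := by
    rw [Matrix.one_apply]
    simp [Fin.ext_iff]
  rw [hone]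
  rcases le_total (j:ℕ) (k:ℕ) with h | h
  · exact dot m j k j.isLt k.isLt h
  · have := dot m k j k.isLt j.isLt h
    rw [Finset.sum_congr rfl (fun n _ => mul_comm (qent m j n) (qent m k n)), this]
    by_cases hjk : (j:ℕ) = (k:ℕ) <;> simp [hjk, eq_comm]

lemma QtJQ (m : ℕ) (hm : 0 < m) :
    (Dipole.Qmat m)ᵀ * ((Matrix.of fun _ _ => (1:ℝ)) : Matrix (Fin m) (Fin m) ℝ) * Dipole.Qmat m
      = Matrix.diagonal (fun i : Fin m => if (i:ℕ) = 0 then (m:ℝ) else 0) := by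
  ext j k
  rw [Matrix.mul_apply]
  have hmid : ∀ i : Fin m, ((Dipole.Qmat m)ᵀ * ((Matrix.of fun _ _ => (1:ℝ)) : Matrix (Fin m) (Fin m) ℝ)) j i
      = ∑ n ∈ Finset.range m, qent m j n := by
    intro i
    rw [Matrix.mul_apply]
    rw [← Fin.sum_univ_eq_sum_range (fun n => qent m j n) m]
    exact Finset.sum_congr rfl (fun i' _ => by
      rw [Matrix.transpose_apply, Qmat_eq]; simp)
  have hrw : (∑ i : Fin m, ((Dipole.Qmat m)ᵀ * ((Matrix.of fun _ _ => (1:ℝ)) : Matrix (Fin m) (Fin m) ℝ)) j i * Dipole.Qmat m i k)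
      = (∑ n ∈ Finset.range m, qent m j n) * (∑ n ∈ Finset.range m, qent m k n) := by
    have h2 : ∑ i : Fin m, ((Qmat m)ᵀ * ((Matrix.of fun _ _ => (1:ℝ)) : Matrix (Fin m) (Fin m) ℝ)) j i * Qmat m i k
        = ∑ i : Fin m, (∑ n ∈ Finset.range m, qent m j n) * qent m k i :=
      Finset.sum_congr rfl (fun i _ => by rw [hmid, Qmat_eq])
    rw [h2, ← Finset.mul_sum, ← Fin.sum_univ_eq_sum_range (fun n => qent m k n) m]
  rw [hrw, colsum m j j.isLt, colsum m k k.isLt]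
  rw [Matrix.diagonal_apply]
  have hs : Real.sqrt m * Real.sqrt m = m := Real.mul_self_sqrt (by positivity)
  by_cases hjk : j = k
  · subst hjk
    by_cases h0 : (j:ℕ) = 0 <;> simp [h0, hs]
  · rw [if_neg hjk]
    have : (j:ℕ) ≠ (k:ℕ) ∨ True := Or.inr trivial
    by_cases h0 : (j:ℕ) = 0 <;> by_cases h1 : (k:ℕ) = 0 <;> simp [h0, h1]
    exact absurd (Fin.ext (h0.trans h1.symm) : j = k) hjk

lemma conj (m : ℕ) (hm : 0 < m) (α : ℝ) :
    (Qmat m)ᵀ * Amat m α * Qmat m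
      = Matrix.diagonal (fun i : Fin m => if (i:ℕ) = 0 then (1:ℝ) else α) := by
  have hmne : (m:ℝ) ≠ 0 := Nat.cast_ne_zero.mpr (by omega)
  have h1 : (Qmat m)ᵀ * Amat m α * Qmat m
      = α • ((Qmat m)ᵀ * Qmat m)
        + ((1-α)/m) • ((Qmat m)ᵀ * ((Matrix.of fun _ _ => (1:ℝ)) : Matrix (Fin m) (Fin m) ℝ) * Qmat m) := by
    simp only [Amat, Matrix.mul_add, Matrix.add_mul, Matrix.mul_smul, Matrix.smul_mul,
      Matrix.mul_one]
  rw [h1, QtQ m, QtJQ m hm]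
  ext i k
  by_cases h : i = k
  · subst h
    by_cases h0 : (i:ℕ) = 0 <;>
        simp [Matrix.diagonal_apply_eq, Matrix.one_apply_eq, h0]
    field_simp
    ring
  · simp [Matrix.diagonal_apply_ne _ h, Matrix.one_apply_ne h]

end DipoleAux

open Dipole in
/-- **Lemma 3.3 (diagonalization of `A`, `B`, `H_odd`, `H_even` and `H`).**
`Q` is orthogonal with `Qᵀ A Q = diag(1, α, …, α)` and `Qᵀ B Q = diag(1, β, …, β)`;
`P` is orthogonal with `Pᵀ H_odd P = [[D₁, D₂], [D₁, D₂]]`,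
`Pᵀ H_even P = [[D₁, −D₂], [−D₁, D₂]]` and `Pᵀ H P = diag(1, γ, …, γ, 0, δ, …, δ)`
for `H = (H_odd + H_even)/2`, `D₁ = diag(1, γ, …, γ)`, `D₂ = diag(0, δ, …, δ)`. -/
theorem Dipole.diagonalization
    (m : ℕ) (hm : 2 ≤ m) (α β : ℝ)
    (hα : α ∈ Set.Icc (-(1 / ((m : ℝ) - 1))) 1)
    (hβ : β ∈ Set.Icc (-(1 / ((m : ℝ) - 1))) 1) :
    (Qmat m)ᵀ * Qmat m = 1 ∧ Qmat m * (Qmat m)ᵀ = 1 ∧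
    (Qmat m)ᵀ * Amat m α * Qmat m =
      Matrix.diagonal (fun i : Fin m => if (i : ℕ) = 0 then 1 else α) ∧
    (Qmat m)ᵀ * Bmat m β * Qmat m =
      Matrix.diagonal (fun i : Fin m => if (i : ℕ) = 0 then 1 else β) ∧
    (Pmat m)ᵀ * Pmat m = 1 ∧ Pmat m * (Pmat m)ᵀ = 1 ∧
    (Pmat m)ᵀ * Hodd m α β * Pmat m =
      Matrix.fromBlocks
        (Matrix.diagonal fun i : Fin m => if (i : ℕ) = 0 then 1 else (α + β) / 2)
        (Matrix.diagonal fun i : Fin m => if (i : ℕ) = 0 then 0 else (α - β) / 2)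
        (Matrix.diagonal fun i : Fin m => if (i : ℕ) = 0 then 1 else (α + β) / 2)
        (Matrix.diagonal fun i : Fin m => if (i : ℕ) = 0 then 0 else (α - β) / 2) ∧
    (Pmat m)ᵀ * Heven m α β * Pmat m =
      Matrix.fromBlocks
        (Matrix.diagonal fun i : Fin m => if (i : ℕ) = 0 then 1 else (α + β) / 2)
        (-(Matrix.diagonal fun i : Fin m => if (i : ℕ) = 0 then 0 else (α - β) / 2))
        (-(Matrix.diagonal fun i : Fin m => if (i : ℕ) = 0 then 1 else (α + β) / 2))
        (Matrix.diagonal fun i : Fin m => if (i : ℕ) = 0 then 0 else (α - β) / 2) ∧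
    (Pmat m)ᵀ * ((1 / 2 : ℝ) • (Hodd m α β + Heven m α β)) * Pmat m =
      Matrix.fromBlocks
        (Matrix.diagonal fun i : Fin m => if (i : ℕ) = 0 then 1 else (α + β) / 2) 0 0
        (Matrix.diagonal fun i : Fin m => if (i : ℕ) = 0 then 0 else (α - β) / 2) := by
  have hm0 : 0 < m := by omega
  have hQtQ : (Qmat m)ᵀ * Qmat m = 1 := DipoleAux.QtQ m
  have hQQt : Qmat m * (Qmat m)ᵀ = 1 := mul_eq_one_comm.mp hQtQ
  have hA : (Qmat m)ᵀ * Amat m α * Qmat m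
      = Matrix.diagonal (fun i : Fin m => if (i:ℕ) = 0 then (1:ℝ) else α) :=
    DipoleAux.conj m hm0 α
  have hBA : Bmat m β = Amat m β := rfl
  have hB : (Qmat m)ᵀ * Bmat m β * Qmat m
      = Matrix.diagonal (fun i : Fin m => if (i:ℕ) = 0 then (1:ℝ) else β) := by
    rw [hBA]; exact DipoleAux.conj m hm0 β
  -- abbreviations
  set DA := Matrix.diagonal (fun i : Fin m => if (i:ℕ) = 0 then (1:ℝ) else α) with hDA
  set DB := Matrix.diagonal (fun i : Fin m => if (i:ℕ) = 0 then (1:ℝ) else β) with hDB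
  set D₁ := Matrix.diagonal (fun i : Fin m => if (i:ℕ) = 0 then (1:ℝ) else (α + β) / 2) with hD₁
  set D₂ := Matrix.diagonal (fun i : Fin m => if (i:ℕ) = 0 then (0:ℝ) else (α - β) / 2) with hD₂
  have hplus : (2⁻¹:ℝ) • (DA + DB) = D₁ := by
    ext i k
    by_cases h : i = k
    · subst h
      by_cases h0 : (i:ℕ) = 0 <;>
        simp [hDA, hDB, hD₁, Matrix.diagonal_apply_eq, h0] <;> ring
    · simp [hDA, hDB, hD₁, Matrix.diagonal_apply_ne _ h]
  have hminus : (2⁻¹:ℝ) • (DA + -DB) = D₂ := by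
    ext i k
    by_cases h : i = k
    · subst h
      by_cases h0 : (i:ℕ) = 0 <;>
        simp [hDA, hDB, hD₂, Matrix.diagonal_apply_eq, h0] <;> ring
    · simp [hDA, hDB, hD₂, Matrix.diagonal_apply_ne _ h]
  have hminus' : (2⁻¹:ℝ) • (DB + -DA) = -D₂ := by
    have : DB + -DA = -(DA + -DB) := by abel
    rw [this, smul_neg, hminus]
  have hplus' : (2⁻¹:ℝ) • (-DB + -DA) = -D₁ := by
    have : -DB + -DA = -(DA + DB) := by abel
    rw [this, smul_neg, hplus]
  have hc : ((Real.sqrt 2)⁻¹ : ℝ) * (Real.sqrt 2)⁻¹ = 2⁻¹ := by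
    rw [← mul_inv, Real.mul_self_sqrt (by norm_num)]
  have hPt : (Pmat m)ᵀ
      = (Real.sqrt 2)⁻¹ • fromBlocks (Qmat m)ᵀ (Qmat m)ᵀ (Qmat m)ᵀ (-(Qmat m)ᵀ) := by
    simp [Pmat, Matrix.transpose_smul, Matrix.fromBlocks_transpose, Matrix.transpose_neg]
  have key : ∀ M : Matrix (Fin m ⊕ Fin m) (Fin m ⊕ Fin m) ℝ,
      (Pmat m)ᵀ * M * Pmat m
        = (2⁻¹:ℝ) • (fromBlocks (Qmat m)ᵀ (Qmat m)ᵀ (Qmat m)ᵀ (-(Qmat m)ᵀ) * M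
            * fromBlocks (Qmat m) (Qmat m) (Qmat m) (-(Qmat m))) := by
    intro M
    rw [hPt, Pmat, Matrix.smul_mul, Matrix.smul_mul, Matrix.mul_smul, smul_smul, hc]
  have hPtP : (Pmat m)ᵀ * Pmat m = 1 := by
    have h1 : (Pmat m)ᵀ * Pmat m
        = (2⁻¹:ℝ) • (fromBlocks (Qmat m)ᵀ (Qmat m)ᵀ (Qmat m)ᵀ (-(Qmat m)ᵀ)
            * fromBlocks (Qmat m) (Qmat m) (Qmat m) (-(Qmat m))) := by
      rw [hPt, Pmat, Matrix.smul_mul, Matrix.mul_smul, smul_smul, hc]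
    rw [h1, Matrix.fromBlocks_multiply]
    simp only [Matrix.mul_neg, Matrix.neg_mul, neg_neg, hQtQ, add_neg_cancel]
    rw [Matrix.fromBlocks_smul, smul_zero]
    have h11 : (2⁻¹:ℝ) • ((1 : Matrix (Fin m) (Fin m) ℝ) + 1) = 1 := by
      rw [← two_smul ℝ, smul_smul]; norm_num
    rw [h11, Matrix.fromBlocks_one]
  have hPPt : Pmat m * (Pmat m)ᵀ = 1 := mul_eq_one_comm.mp hPtP
  have hHodd : (Pmat m)ᵀ * Hodd m α β * Pmat m = fromBlocks D₁ D₂ D₁ D₂ := by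
    rw [key, Hodd, Matrix.fromBlocks_multiply, Matrix.fromBlocks_multiply]
    simp only [Matrix.mul_zero, Matrix.zero_mul, add_zero, zero_add, Matrix.mul_neg,
      Matrix.neg_mul, Matrix.add_mul, hA, hB]
    rw [Matrix.fromBlocks_smul, hplus, hminus]
  have hHeven : (Pmat m)ᵀ * Heven m α β * Pmat m
      = fromBlocks D₁ (-D₂) (-D₁) D₂ := by
    rw [key, Heven, Matrix.fromBlocks_multiply, Matrix.fromBlocks_multiply]
    simp only [Matrix.mul_zero, Matrix.zero_mul, add_zero, zero_add, Matrix.mul_neg,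
      Matrix.neg_mul, Matrix.add_mul, neg_neg, hA, hB]
    rw [Matrix.fromBlocks_smul, add_comm DB DA, add_comm (-DB) DA, hplus, hminus, hminus',
      hplus']
  refine ⟨hQtQ, hQQt, hA, hB, hPtP, hPPt, hHodd, hHeven, ?_⟩
  have hsplit : (Pmat m)ᵀ * ((1 / 2 : ℝ) • (Hodd m α β + Heven m α β)) * Pmat m
      = (2⁻¹:ℝ) • ((Pmat m)ᵀ * Hodd m α β * Pmat m + (Pmat m)ᵀ * Heven m α β * Pmat m) := by
    rw [Matrix.mul_smul, Matrix.smul_mul, Matrix.mul_add, Matrix.add_mul]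
    norm_num
  rw [hsplit, hHodd, hHeven, Matrix.fromBlocks_add]
  simp only [add_neg_cancel, neg_add_cancel]
  rw [Matrix.fromBlocks_smul, smul_zero]
  have g1 : (2⁻¹:ℝ) • (D₁ + D₁) = D₁ := by rw [← two_smul ℝ, smul_smul]; norm_num
  have g2 : (2⁻¹:ℝ) • (D₂ + D₂) = D₂ := by rw [← two_smul ℝ, smul_smul]; norm_num
  rw [g1, g2]
end
end

section
/- There exists a constant C > 0 such that for all integers k ≥ l ≥ 1, ‖(P^T Π_{2k,2l−1} P)_{2:2m,2:2m}‖_op ≤ C·λ_{k,l}(ρ) and ‖(P^T Π_{2k,2l} P)_{2:2m,2:2m}‖_op ≤ C·λ_{k,l}(ρ). -/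
set_option maxHeartbeats 1000000


open Matrix

noncomputable section

attribute [local instance] Classical.propDecidable

namespace Dipole

section AuxQ
open Finset
/-- normalizing constant of the column `w_j` -/
def cQ (j : ℕ) : ℝ := (Real.sqrt ((j : ℝ) * ((j + 1 : ℕ) : ℝ)))⁻¹

/-- entry of `Q` as a function of naturals -/
def qent (m j i : ℕ) : ℝ :=
  if j = 0 then (Real.sqrt m)⁻¹
  else if i < j then cQ j
  else if i = j then -((j : ℝ)) * cQ j
  else 0

lemma Qmat_apply (m : ℕ) (i j : Fin m) : Qmat m i j = qent m (j : ℕ) (i : ℕ) := rfl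

lemma qent_zero (m i : ℕ) : qent m 0 i = (Real.sqrt m)⁻¹ := by
  rw [qent, if_pos rfl]

lemma qent_lt {m j i : ℕ} (hj : j ≠ 0) (h : i < j) : qent m j i = cQ j := by
  rw [qent, if_neg hj, if_pos h]

lemma qent_diag {m j : ℕ} (hj : j ≠ 0) : qent m j j = -((j : ℝ)) * cQ j := by
  rw [qent, if_neg hj, if_neg (lt_irrefl j), if_pos rfl]

lemma qent_of_gt {m j i : ℕ} (hj : j ≠ 0) (h : j < i) : qent m j i = 0 := by
  rw [qent, if_neg hj, if_neg (by omega : ¬ i < j), if_neg (by omega : ¬ i = j)]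

lemma cQ_sq {j : ℕ} (hj : j ≠ 0) : cQ j ^ 2 = (((j : ℝ)) * ((j : ℝ) + 1))⁻¹ := by
  rw [cQ, ← Real.sqrt_inv, Real.sq_sqrt (by positivity)]
  push_cast
  ring_nf

lemma qent_partial_sum {m j : ℕ} (hj : j ≠ 0) :
    ∑ i ∈ range (j + 1), qent m j i = 0 := by
  have e : ∀ i ∈ range j, qent m j i = cQ j := fun i hi => qent_lt hj (Finset.mem_range.1 hi)
  rw [Finset.sum_range_succ, qent_diag hj, Finset.sum_congr rfl e,
    Finset.sum_const, Finset.card_range, nsmul_eq_mul]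
  ring

lemma qent_partial_sum_sq {m j : ℕ} (hj : j ≠ 0) :
    ∑ i ∈ range (j + 1), qent m j i ^ 2 = 1 := by
  have e : ∀ i ∈ range j, qent m j i ^ 2 = cQ j ^ 2 := fun i hi => by
    rw [qent_lt hj (Finset.mem_range.1 hi)]
  rw [Finset.sum_range_succ, qent_diag hj, Finset.sum_congr rfl e,
    Finset.sum_const, Finset.card_range, nsmul_eq_mul, mul_pow, neg_pow]
  have h2 := cQ_sq hj
  have hjR : (0:ℝ) < (j : ℝ) := by exact_mod_cast Nat.pos_of_ne_zero hj
  rw [h2]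
  field_simp
  ring

lemma qent_sum_eq {m j : ℕ} (hj : j ≠ 0) (hjm : j < m) :
    ∑ i ∈ range m, qent m j i = 0 := by
  rw [← qent_partial_sum (m := m) hj]
  symm
  apply Finset.sum_subset (Finset.range_subset_range.2 (by omega))
  intro i _ hi
  simp only [Finset.mem_range, not_lt] at hi
  exact qent_of_gt hj (by omega)

lemma QtQ (m : ℕ) (hm : 1 ≤ m) : (Qmat m)ᵀ * Qmat m = 1 := by
  have key : ∀ j j' : ℕ, j < m → j' < m → j ≤ j' →
      ∑ i ∈ range m, qent m j i * qent m j' i = if j = j' then 1 else 0 := by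
    intro j j' hjm hj'm hle
    by_cases hj' : j' = 0
    · have hj : j = 0 := by omega
      subst hj; subst hj'
      have e : ∀ i ∈ range m, qent m 0 i * qent m 0 i = (Real.sqrt m)⁻¹ * (Real.sqrt m)⁻¹ :=
        fun i _ => by rw [qent_zero]
      rw [if_pos rfl, Finset.sum_congr rfl e,
        Finset.sum_const, Finset.card_range, nsmul_eq_mul, ← mul_inv,
        Real.mul_self_sqrt (by positivity)]
      have : (m : ℝ) ≠ 0 := by exact_mod_cast (by omega : m ≠ 0)
      field_simp
    · by_cases hj : j = 0
      · subst hj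
        have e : ∀ i ∈ range m, qent m 0 i * qent m j' i = (Real.sqrt m)⁻¹ * qent m j' i :=
          fun i _ => by rw [qent_zero]
        rw [if_neg (by omega), Finset.sum_congr rfl e,
          ← Finset.mul_sum, qent_sum_eq hj' hj'm, mul_zero]
      · by_cases heq : j = j'
        · subst heq
          have e : ∀ i ∈ range m, qent m j i * qent m j i = qent m j i ^ 2 :=
            fun i _ => (sq (qent m j i)).symm
          rw [if_pos rfl, Finset.sum_congr rfl e, ← qent_partial_sum_sq (m := m) hj]
          symm
          apply Finset.sum_subset (Finset.range_subset_range.2 (by omega))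
          intro i _ hi
          simp only [Finset.mem_range, not_lt] at hi
          rw [qent_of_gt hj (by omega)]; ring
        · have hlt : j < j' := by omega
          rw [if_neg heq]
          have step1 : ∑ i ∈ range m, qent m j i * qent m j' i
              = ∑ i ∈ range (j + 1), qent m j i * qent m j' i := by
            symm
            apply Finset.sum_subset (Finset.range_subset_range.2 (by omega))
            intro i _ hi
            simp only [Finset.mem_range, not_lt] at hi
            rw [qent_of_gt hj (by omega)]; ring
          have e : ∀ i ∈ range (j + 1), qent m j i * qent m j' i = qent m j i * cQ j' :=
            fun i hi => by rw [qent_lt hj' (by have := Finset.mem_range.1 hi; omega)]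
          rw [step1, Finset.sum_congr rfl e,
            ← Finset.sum_mul, qent_partial_sum (m := m) hj, zero_mul]
  ext j j'
  rw [Matrix.mul_apply, Matrix.one_apply]
  simp only [Matrix.transpose_apply, Qmat_apply]
  rw [Fin.sum_univ_eq_sum_range (fun i => qent m (j:ℕ) i * qent m (j':ℕ) i) m]
  rcases le_total (j:ℕ) (j':ℕ) with h | h
  · rw [key _ _ j.isLt j'.isLt h]
    by_cases hjj : j = j'
    · rw [if_pos hjj, if_pos (by rw [hjj])]
    · rw [if_neg hjj, if_neg (fun hc => hjj (Fin.ext hc))]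
  · rw [Finset.sum_congr rfl (fun i _ => mul_comm _ _), key _ _ j'.isLt j.isLt h]
    by_cases hjj : j = j'
    · rw [if_pos hjj, if_pos (by rw [hjj])]
    · rw [if_neg hjj, if_neg (fun hc => hjj (Fin.ext hc.symm))]
lemma QQt (m : ℕ) (hm : 1 ≤ m) : Qmat m * (Qmat m)ᵀ = 1 :=
  mul_eq_one_comm.1 (QtQ m hm)

lemma Qmat_col0 (m : ℕ) (i : Fin m) [NeZero m] : Qmat m i 0 = (Real.sqrt m)⁻¹ := by
  simp [Qmat]

lemma Qmat_colsum (m : ℕ) (hm : 1 ≤ m) [NeZero m] (j : Fin m) :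
    ∑ i, Qmat m i j = if (j : ℕ) = 0 then Real.sqrt m else 0 := by
  have hQtQ := congrFun (congrFun (QtQ m hm) 0) j
  rw [Matrix.mul_apply, Matrix.one_apply] at hQtQ
  simp only [Matrix.transpose_apply, Qmat_col0] at hQtQ
  rw [← Finset.mul_sum] at hQtQ
  have hs : (0:ℝ) < Real.sqrt m := Real.sqrt_pos.2 (by exact_mod_cast Nat.pos_of_ne_zero (NeZero.ne m))
  have h2 : ∑ i, Qmat m i j = Real.sqrt m * ((Real.sqrt m)⁻¹ * ∑ i, Qmat m i j) := by
    field_simp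
  rw [h2, hQtQ]
  by_cases hj : (0 : Fin m) = j
  · rw [if_pos hj, if_pos (by rw [← hj]; simp), mul_one]
  · rw [if_neg hj, if_neg (by
      intro hc
      exact hj (Fin.ext (by simp [hc]))), mul_zero]
/-- diagonalized form of `Amat` -/
def DA (m : ℕ) (α : ℝ) : Matrix (Fin m) (Fin m) ℝ :=
  Matrix.of fun j j' => if j = j' then (if (j : ℕ) = 0 then 1 else α) else 0

lemma QJQ (m : ℕ) (hm : 1 ≤ m) [NeZero m] :
    (Qmat m)ᵀ * (Matrix.of fun _ _ => (1:ℝ)) * Qmat m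
      = Matrix.of fun (j j' : Fin m) => if (j : ℕ) = 0 ∧ (j' : ℕ) = 0 then (m : ℝ) else 0 := by
  have hJQ : (Matrix.of fun _ _ => (1:ℝ)) * Qmat m
      = Matrix.of fun (_ j : Fin m) => if (j : ℕ) = 0 then Real.sqrt m else 0 := by
    ext i j
    rw [Matrix.mul_apply]
    simp only [Matrix.of_apply, one_mul]
    exact Qmat_colsum m hm j
  rw [Matrix.mul_assoc, hJQ]
  ext j j'
  rw [Matrix.mul_apply]
  simp only [Matrix.transpose_apply, Matrix.of_apply]
  by_cases hj' : (j' : ℕ) = 0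
  · simp only [if_pos hj']
    rw [← Finset.sum_mul, Qmat_colsum m hm j]
    by_cases hj : (j : ℕ) = 0
    · rw [if_pos hj, if_pos ⟨hj, hj'⟩, Real.mul_self_sqrt (by positivity)]
    · rw [if_neg hj, if_neg (by tauto), zero_mul]
  · simp only [if_neg hj', mul_zero, Finset.sum_const_zero,
      if_neg (by tauto : ¬ ((j : ℕ) = 0 ∧ (j' : ℕ) = 0))]

lemma QAQ (m : ℕ) (hm : 1 ≤ m) [NeZero m] (α : ℝ) :
    (Qmat m)ᵀ * Amat m α * Qmat m = DA m α := by
  have hm0 : (m : ℝ) ≠ 0 := by exact_mod_cast (by omega : m ≠ 0)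
  rw [Amat, Matrix.mul_add, Matrix.add_mul, Matrix.mul_smul, Matrix.smul_mul,
    Matrix.mul_smul, Matrix.smul_mul, Matrix.mul_one, QtQ m hm, QJQ m hm]
  ext j j'
  simp only [Matrix.add_apply, Matrix.smul_apply, Matrix.one_apply, Matrix.of_apply, DA,
    smul_eq_mul]
  by_cases hjj : j = j'
  · subst hjj
    rw [if_pos rfl, if_pos rfl]
    by_cases hj : (j : ℕ) = 0
    · rw [if_pos ⟨hj, hj⟩, if_pos hj]
      field_simp
      ring
    · rw [if_neg (by tauto), if_neg hj]
      ring
  · rw [if_neg hjj, if_neg hjj, if_neg (by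
      rintro ⟨h1, h2⟩
      exact hjj (Fin.ext (by rw [h1, h2])))]
    ring
/-- rotated `H_odd` -/
def Gox (m : ℕ) (α β : ℝ) : Matrix (Fin m ⊕ Fin m) (Fin m ⊕ Fin m) ℝ :=
  (2⁻¹ : ℝ) • fromBlocks (DA m α + DA m β) (DA m α - DA m β)
    (DA m α + DA m β) (DA m α - DA m β)

/-- rotated `H_even` -/
def Gev (m : ℕ) (α β : ℝ) : Matrix (Fin m ⊕ Fin m) (Fin m ⊕ Fin m) ℝ :=
  (2⁻¹ : ℝ) • fromBlocks (DA m α + DA m β) (-(DA m α - DA m β))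
    (-(DA m α + DA m β)) (DA m α - DA m β)

lemma Pt_eq (m : ℕ) : (Pmat m)ᵀ
    = (Real.sqrt 2)⁻¹ • fromBlocks (Qmat m)ᵀ (Qmat m)ᵀ (Qmat m)ᵀ (-(Qmat m)ᵀ) := by
  rw [Pmat, Matrix.transpose_smul, Matrix.fromBlocks_transpose, Matrix.transpose_neg]

lemma sqrt2_sq : (Real.sqrt 2)⁻¹ * (Real.sqrt 2)⁻¹ = (2⁻¹ : ℝ) := by
  rw [← mul_inv, Real.mul_self_sqrt (by norm_num)]

lemma smul_mul_smul_mat {n : Type*} [Fintype n] (a b : ℝ) (X Y : Matrix n n ℝ) :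
    (a • X) * (b • Y) = (a * b) • (X * Y) := by
  rw [Matrix.smul_mul, Matrix.mul_smul, smul_smul]

lemma PtP (m : ℕ) (hm : 1 ≤ m) : (Pmat m)ᵀ * Pmat m = 1 := by
  rw [Pt_eq, Pmat, smul_mul_smul_mat, sqrt2_sq, Matrix.fromBlocks_multiply]
  simp only [Matrix.mul_neg, Matrix.neg_mul, neg_neg, QtQ m hm]
  have h1 : (1 : Matrix (Fin m) (Fin m) ℝ) + 1 = (2:ℝ) • 1 := by
    rw [two_smul]
  have h2 : (1 : Matrix (Fin m) (Fin m) ℝ) + -1 = 0 := by abel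
  rw [h1, h2]
  have h3 : fromBlocks ((2:ℝ) • (1 : Matrix (Fin m) (Fin m) ℝ)) 0 0
      ((2:ℝ) • (1 : Matrix (Fin m) (Fin m) ℝ))
      = (2:ℝ) • fromBlocks (1 : Matrix (Fin m) (Fin m) ℝ) 0 0 1 := by
    rw [Matrix.fromBlocks_smul, smul_zero]
  rw [h3, smul_smul]
  norm_num [Matrix.fromBlocks_one]

lemma PPt (m : ℕ) (hm : 1 ≤ m) : Pmat m * (Pmat m)ᵀ = 1 :=
  mul_eq_one_comm.1 (PtP m hm)

lemma PtHoddP (m : ℕ) (hm : 1 ≤ m) [NeZero m] (α β : ℝ) :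
    (Pmat m)ᵀ * Hodd m α β * Pmat m = Gox m α β := by
  have hB : Bmat m β = Amat m β := rfl
  rw [Pt_eq, Pmat, Hodd, hB]
  simp only [Matrix.smul_mul, Matrix.mul_smul, smul_smul, sqrt2_sq]
  rw [Gox, Matrix.fromBlocks_multiply, Matrix.fromBlocks_multiply]
  congr 1
  rw [Matrix.fromBlocks_inj]
  refine ⟨?_, ?_, ?_, ?_⟩ <;>
    simp only [Matrix.mul_zero, Matrix.zero_mul, add_zero, zero_add, Matrix.mul_neg,
      Matrix.add_mul, Matrix.neg_mul] <;>
    simp only [QAQ m hm α, QAQ m hm β] <;>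
    abel
lemma PtHevenP (m : ℕ) (hm : 1 ≤ m) [NeZero m] (α β : ℝ) :
    (Pmat m)ᵀ * Heven m α β * Pmat m = Gev m α β := by
  have hB : Bmat m β = Amat m β := rfl
  rw [Pt_eq, Pmat, Heven, hB]
  simp only [Matrix.smul_mul, Matrix.mul_smul, smul_smul, sqrt2_sq]
  rw [Gev, Matrix.fromBlocks_multiply, Matrix.fromBlocks_multiply]
  congr 1
  rw [Matrix.fromBlocks_inj]
  refine ⟨?_, ?_, ?_, ?_⟩ <;>
    simp only [Matrix.mul_zero, Matrix.zero_mul, add_zero, zero_add, Matrix.mul_neg,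
      Matrix.add_mul, Matrix.neg_mul] <;>
    simp only [QAQ m hm α, QAQ m hm β] <;>
    abel
-- ===== new material =====

/-- rotated `H_n` -/
def GG (m : ℕ) (α β : ℝ) (n : ℕ) : Matrix (Fin m ⊕ Fin m) (Fin m ⊕ Fin m) ℝ :=
  if Odd n then Gox m α β else Gev m α β

lemma PtHnP (m : ℕ) (hm : 1 ≤ m) [NeZero m] (α β : ℝ) (n : ℕ) :
    (Pmat m)ᵀ * Hn m α β n * Pmat m = GG m α β n := by
  by_cases h : Odd n
  · rw [Hn, GG, if_pos h, if_pos h, PtHoddP m hm]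
  · rw [Hn, GG, if_neg h, if_neg h, PtHevenP m hm]

/-- rotated elementary factor -/
def RG (m : ℕ) (α β : ℝ) (n : ℕ) : Matrix (Fin m ⊕ Fin m) (Fin m ⊕ Fin m) ℝ :=
  1 + ((n : ℝ))⁻¹ • GG m α β (n + 1)

/-- rotated product -/
def RPi (m : ℕ) (α β : ℝ) (l : ℕ) : ℕ → Matrix (Fin m ⊕ Fin m) (Fin m ⊕ Fin m) ℝ
  | 0 => 1
  | k + 1 => if k + 1 < l then 1 else RG m α β (k + 1) * RPi m α β l k

lemma Pt_Pimat_P (m : ℕ) (hm : 1 ≤ m) [NeZero m] (α β : ℝ) (l : ℕ) (n : ℕ) :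
    (Pmat m)ᵀ * Pimat m α β l n * Pmat m = RPi m α β l n := by
  induction n with
  | zero => rw [Pimat, RPi, Matrix.mul_one, PtP m hm]
  | succ k ih =>
    rw [Pimat, RPi]
    by_cases h : k + 1 < l
    · rw [if_pos h, if_pos h, Matrix.mul_one, PtP m hm]
    · rw [if_neg h, if_neg h]
      have expand : (Pmat m)ᵀ *
          (((1 : Matrix (Fin m ⊕ Fin m) (Fin m ⊕ Fin m) ℝ) +
            ((k : ℝ) + 1)⁻¹ • Hn m α β (k + 2)) * Pimat m α β l k) * Pmat m
          = ((Pmat m)ᵀ * ((1 : Matrix (Fin m ⊕ Fin m) (Fin m ⊕ Fin m) ℝ) +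
              ((k : ℝ) + 1)⁻¹ • Hn m α β (k + 2)) * Pmat m) *
            ((Pmat m)ᵀ * Pimat m α β l k * Pmat m) := by
        have h1 : ((Pmat m)ᵀ * ((1 : Matrix (Fin m ⊕ Fin m) (Fin m ⊕ Fin m) ℝ) +
              ((k : ℝ) + 1)⁻¹ • Hn m α β (k + 2)) * Pmat m) *
            ((Pmat m)ᵀ * Pimat m α β l k * Pmat m)
            = (Pmat m)ᵀ * ((1 : Matrix (Fin m ⊕ Fin m) (Fin m ⊕ Fin m) ℝ) +
              ((k : ℝ) + 1)⁻¹ • Hn m α β (k + 2)) * (Pmat m * (Pmat m)ᵀ) *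
              Pimat m α β l k * Pmat m := by
          simp only [Matrix.mul_assoc]
        rw [h1, PPt m hm, Matrix.mul_one]
        simp only [Matrix.mul_assoc]
      rw [expand, ih]
      congr 1
      rw [Matrix.mul_add, Matrix.add_mul, Matrix.mul_one, PtP m hm, Matrix.mul_smul,
        Matrix.smul_mul, PtHnP m hm, RG]
      have : ((k : ℕ) + 1 : ℕ) = k + 1 := rfl
      norm_num

/-- the first-row property: row `inl 0` is supported on the diagonal -/
def RowOK (m : ℕ) [NeZero m] (M : Matrix (Fin m ⊕ Fin m) (Fin m ⊕ Fin m) ℝ) : Prop :=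
  ∀ q, q ≠ Sum.inl 0 → M (Sum.inl 0) q = 0

lemma DA_apply (m : ℕ) (α : ℝ) (j j' : Fin m) :
    DA m α j j' = if j = j' then (if (j : ℕ) = 0 then 1 else α) else 0 := rfl

lemma RowOK_Gox (m : ℕ) [NeZero m] (α β : ℝ) : RowOK m (Gox m α β) := by
  rintro (q | q) hq
  · have hq0 : (0 : Fin m) ≠ q := fun h => hq (by rw [h])
    simp only [Gox, Matrix.smul_apply, Matrix.fromBlocks_apply₁₁, Matrix.add_apply, DA_apply,
      if_neg hq0, smul_eq_mul]
    ring
  · simp only [Gox, Matrix.smul_apply, Matrix.fromBlocks_apply₁₂, Matrix.sub_apply, DA_apply,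
      smul_eq_mul]
    by_cases h : (0 : Fin m) = q
    · rw [← h]; norm_num
    · simp only [if_neg h]; ring
lemma RowOK_Gev (m : ℕ) [NeZero m] (α β : ℝ) : RowOK m (Gev m α β) := by
  rintro (q | q) hq
  · have hq0 : (0 : Fin m) ≠ q := fun h => hq (by rw [h])
    simp only [Gev, Matrix.smul_apply, Matrix.fromBlocks_apply₁₁, Matrix.add_apply, DA_apply,
      if_neg hq0, smul_eq_mul]
    ring
  · simp only [Gev, Matrix.smul_apply, Matrix.fromBlocks_apply₁₂, Matrix.neg_apply,
      Matrix.sub_apply, DA_apply, smul_eq_mul]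
    by_cases h : (0 : Fin m) = q
    · rw [← h]; norm_num
    · simp only [if_neg h]; ring

lemma RowOK_one (m : ℕ) [NeZero m] : RowOK m 1 := by
  intro q hq
  rw [Matrix.one_apply, if_neg (fun h => hq h.symm)]

lemma RowOK_add (m : ℕ) [NeZero m] {M N} (hM : RowOK m M) (hN : RowOK m N) :
    RowOK m (M + N) := by
  intro q hq; rw [Matrix.add_apply, hM q hq, hN q hq, add_zero]

lemma RowOK_smul (m : ℕ) [NeZero m] {M} (a : ℝ) (hM : RowOK m M) : RowOK m (a • M) := by
  intro q hq; rw [Matrix.smul_apply, hM q hq, smul_zero]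

lemma RowOK_mul (m : ℕ) [NeZero m] {M N} (hM : RowOK m M) (hN : RowOK m N) :
    RowOK m (M * N) := by
  intro q hq
  rw [Matrix.mul_apply]
  apply Finset.sum_eq_zero
  intro r _
  by_cases hr : r = Sum.inl 0
  · rw [hr, hN q hq, mul_zero]
  · rw [hM r hr, zero_mul]

lemma RowOK_GG (m : ℕ) [NeZero m] (α β : ℝ) (n : ℕ) : RowOK m (GG m α β n) := by
  rw [GG]; by_cases h : Odd n
  · rw [if_pos h]; exact RowOK_Gox m α β
  · rw [if_neg h]; exact RowOK_Gev m α β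

lemma RowOK_RG (m : ℕ) [NeZero m] (α β : ℝ) (n : ℕ) : RowOK m (RG m α β n) :=
  RowOK_add m (RowOK_one m) (RowOK_smul m _ (RowOK_GG m α β (n + 1)))

lemma RowOK_RPi (m : ℕ) [NeZero m] (α β : ℝ) (l n : ℕ) : RowOK m (RPi m α β l n) := by
  induction n with
  | zero => exact RowOK_one m
  | succ k ih =>
    rw [RPi]
    by_cases h : k + 1 < l
    · rw [if_pos h]; exact RowOK_one m
    · rw [if_neg h]; exact RowOK_mul m (RowOK_RG m α β (k + 1)) ih

/-- splitting a sum over `Fin m ⊕ Fin m` into the `inl 0` term and the rest -/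
lemma sum_split (m : ℕ) [NeZero m] (f : (Fin m ⊕ Fin m) → ℝ) :
    ∑ j, f j = f (Sum.inl 0) + ∑ j : {i : Fin m ⊕ Fin m // i ≠ Sum.inl 0}, f j := by
  have h1 := Finset.sum_filter_add_sum_filter_not Finset.univ
    (fun x : Fin m ⊕ Fin m => x ≠ Sum.inl 0) f
  have h2 : Finset.filter (fun x : Fin m ⊕ Fin m => ¬ x ≠ Sum.inl 0) Finset.univ
      = {Sum.inl 0} := by
    ext x; simp [not_not]
  have h3 : ∑ x ∈ Finset.filter (fun x : Fin m ⊕ Fin m => x ≠ Sum.inl 0) Finset.univ, f x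
      = ∑ j : {i : Fin m ⊕ Fin m // i ≠ Sum.inl 0}, f j :=
    Finset.sum_subtype _ (by simp) f
  rw [← h1, h2, Finset.sum_singleton, h3]
  ring

lemma lowerSub_mul (m : ℕ) [NeZero m] {M N : Matrix (Fin m ⊕ Fin m) (Fin m ⊕ Fin m) ℝ}
    (hN : RowOK m N) : lowerSub m (M * N) = lowerSub m M * lowerSub m N := by
  ext p q
  rw [lowerSub, Matrix.submatrix_apply, Matrix.mul_apply, Matrix.mul_apply,
    sum_split m (fun j => M p.1 j * N j q.1)]
  rw [hN q.1 q.2, mul_zero, zero_add]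
  rfl

lemma lowerSub_one (m : ℕ) [NeZero m] :
    lowerSub m (1 : Matrix (Fin m ⊕ Fin m) (Fin m ⊕ Fin m) ℝ) = 1 := by
  ext p q
  rw [lowerSub, Matrix.submatrix_apply, Matrix.one_apply, Matrix.one_apply]
  by_cases h : p = q
  · rw [if_pos h, if_pos (by rw [h])]
  · rw [if_neg h, if_neg (fun hc => h (Subtype.ext hc))]

lemma lowerSub_add (m : ℕ) [NeZero m] (M N : Matrix (Fin m ⊕ Fin m) (Fin m ⊕ Fin m) ℝ) :
    lowerSub m (M + N) = lowerSub m M + lowerSub m N := rfl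

-- opNorm machinery
lemma opNorm_nonneg {ι : Type*} [Fintype ι] [DecidableEq ι] (M : Matrix ι ι ℝ) :
    0 ≤ opNorm M := norm_nonneg _

lemma opNorm_mul_le {ι : Type*} [Fintype ι] [DecidableEq ι] (M N : Matrix ι ι ℝ) :
    opNorm (M * N) ≤ opNorm M * opNorm N := by
  rw [opNorm, opNorm, opNorm, _root_.map_mul]
  exact norm_mul_le _ _

lemma opNorm_le_of_sq {ι : Type*} [Fintype ι] [DecidableEq ι] (M : Matrix ι ι ℝ) {C : ℝ}
    (hC : 0 ≤ C) (h : ∀ x : ι → ℝ, ∑ p, (M.mulVec x p)^2 ≤ C^2 * ∑ p, (x p)^2) :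
    opNorm M ≤ C := by
  rw [opNorm]
  refine ContinuousLinearMap.opNorm_le_bound _ hC fun x => ?_
  rw [EuclideanSpace.norm_eq, EuclideanSpace.norm_eq]
  simp only [Real.norm_eq_abs, sq_abs]
  have h2 := h (WithLp.ofLp x)
  calc Real.sqrt (∑ p, ((toEuclideanCLM (𝕜 := ℝ) M x) p)^2)
      ≤ Real.sqrt (C^2 * ∑ p, (x p)^2) := Real.sqrt_le_sqrt h2
    _ = C * Real.sqrt (∑ p, (x p)^2) := by
        rw [Real.sqrt_mul (sq_nonneg C), Real.sqrt_sq hC]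

end AuxQ

section AuxNorm
open Finset
variable {ι : Type*} [Fintype ι] [DecidableEq ι]

lemma sq_sum_abs_le (x : ι → ℝ) :
    (∑ p, |x p|)^2 ≤ (Fintype.card ι) * ∑ p, (x p)^2 := by
  have h := Finset.sum_mul_sq_le_sq_mul_sq Finset.univ (fun _ => (1:ℝ)) (fun p => |x p|)
  simpa [sq_abs, Finset.card_univ] using h

lemma mulVec_entry_abs_le (N : Matrix ι ι ℝ) {c : ℝ} (hc : ∀ p q, |N p q| ≤ c)
    (x : ι → ℝ) (p : ι) : |N.mulVec x p| ≤ c * ∑ q, |x q| := by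
  calc |N.mulVec x p| = |∑ q, N p q * x q| := rfl
    _ ≤ ∑ q, |N p q * x q| := Finset.abs_sum_le_sum_abs _ _
    _ ≤ ∑ q, c * |x q| := Finset.sum_le_sum (fun q _ => by
        rw [abs_mul]
        exact mul_le_mul_of_nonneg_right (hc p q) (abs_nonneg _))
    _ = c * ∑ q, |x q| := by rw [Finset.mul_sum]

lemma quad_le (N : Matrix ι ι ℝ) {c : ℝ} (hc0 : 0 ≤ c) (hc : ∀ p q, |N p q| ≤ c)
    (x : ι → ℝ) :
    ∑ p, x p * N.mulVec x p ≤ c * (Fintype.card ι) * ∑ p, (x p)^2 := by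
  calc ∑ p, x p * N.mulVec x p ≤ |∑ p, x p * N.mulVec x p| := le_abs_self _
    _ ≤ ∑ p, |x p * N.mulVec x p| := Finset.abs_sum_le_sum_abs _ _
    _ ≤ ∑ p, |x p| * (c * ∑ q, |x q|) := Finset.sum_le_sum (fun p _ => by
        rw [abs_mul]
        exact mul_le_mul_of_nonneg_left (mulVec_entry_abs_le N hc x p) (abs_nonneg _))
    _ = c * (∑ p, |x p|)^2 := by rw [← Finset.sum_mul]; ring
    _ ≤ c * ((Fintype.card ι) * ∑ p, (x p)^2) :=
        mul_le_mul_of_nonneg_left (sq_sum_abs_le x) hc0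
    _ = c * (Fintype.card ι) * ∑ p, (x p)^2 := by ring

lemma normsq_le (N : Matrix ι ι ℝ) {c : ℝ} (hc0 : 0 ≤ c) (hc : ∀ p q, |N p q| ≤ c)
    (x : ι → ℝ) :
    ∑ p, (N.mulVec x p)^2 ≤ (c * (Fintype.card ι))^2 * ∑ p, (x p)^2 := by
  have step : ∀ p : ι, (N.mulVec x p)^2 ≤ c^2 * ((Fintype.card ι) * ∑ q, (x q)^2) := by
    intro p
    have h1 := mulVec_entry_abs_le N hc x p
    have h2 : (N.mulVec x p)^2 ≤ (c * ∑ q, |x q|)^2 := by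
      rw [← sq_abs]
      exact pow_le_pow_left₀ (abs_nonneg _) h1 2
    have h3 : (c * ∑ q, |x q|)^2 = c^2 * (∑ q, |x q|)^2 := by ring
    have h4 : c^2 * (∑ q, |x q|)^2 ≤ c^2 * ((Fintype.card ι) * ∑ q, (x q)^2) :=
      mul_le_mul_of_nonneg_left (sq_sum_abs_le x) (sq_nonneg c)
    calc (N.mulVec x p)^2 ≤ (c * ∑ q, |x q|)^2 := h2
      _ = c^2 * (∑ q, |x q|)^2 := h3
      _ ≤ c^2 * ((Fintype.card ι) * ∑ q, (x q)^2) := h4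
  calc ∑ p, (N.mulVec x p)^2 ≤ ∑ _p : ι, c^2 * ((Fintype.card ι) * ∑ q, (x q)^2) :=
        Finset.sum_le_sum (fun p _ => step p)
    _ = (c * (Fintype.card ι))^2 * ∑ q, (x q)^2 := by
        rw [Finset.sum_const, Finset.card_univ, nsmul_eq_mul]; ring

lemma mul_entry_le (X Y : Matrix ι ι ℝ) {cX cY : ℝ} (hcY0 : 0 ≤ cY)
    (hX : ∀ p q, |X p q| ≤ cX) (hY : ∀ p q, |Y p q| ≤ cY) (p q : ι) :
    |(X * Y) p q| ≤ (Fintype.card ι) * (cX * cY) := by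
  have hcX0 : 0 ≤ cX := le_trans (abs_nonneg _) (hX p q)
  calc |(X * Y) p q| = |∑ r, X p r * Y r q| := by rw [Matrix.mul_apply]
    _ ≤ ∑ r, |X p r * Y r q| := Finset.abs_sum_le_sum_abs _ _
    _ ≤ ∑ _r : ι, cX * cY := Finset.sum_le_sum (fun r _ => by
        rw [abs_mul]
        exact mul_le_mul (hX p r) (hY r q) (abs_nonneg _) hcX0)
    _ = (Fintype.card ι) * (cX * cY) := by
        rw [Finset.sum_const, Finset.card_univ, nsmul_eq_mul]

/-- the master quadratic-form estimate -/
lemma opNorm_one_add_le (M : Matrix ι ι ℝ) (d : ι → ℝ) (D cE cM C : ℝ)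
    (hD : 0 ≤ D) (hcE : 0 ≤ cE) (hcM : 0 ≤ cM) (hC : 0 ≤ C)
    (hd : ∀ p, d p ≤ D)
    (hE : ∀ p q, |M p q - Matrix.diagonal d p q| ≤ cE)
    (hM : ∀ p q, |M p q| ≤ cM)
    (hfin : 1 + 2*D + 2*(cE*(Fintype.card ι)) + (cM*(Fintype.card ι))^2 ≤ C^2) :
    opNorm (1 + M) ≤ C := by
  apply opNorm_le_of_sq _ hC
  intro x
  set n : ℝ := (Fintype.card ι : ℝ) with hn
  have hn0 : (0:ℝ) ≤ n := by positivity
  set S := ∑ p, (x p)^2 with hS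
  have hS0 : 0 ≤ S := Finset.sum_nonneg (fun p _ => sq_nonneg _)
  set E : Matrix ι ι ℝ := M - Matrix.diagonal d with hEdef
  have hMsplit : M = Matrix.diagonal d + E := by rw [hEdef]; abel
  -- expansion
  have hmv : ∀ p, (1 + M).mulVec x p = x p + M.mulVec x p := by
    intro p
    rw [Matrix.add_mulVec, Matrix.one_mulVec]
    rfl
  have expand : ∑ p, ((1 + M).mulVec x p)^2
      = S + 2*(∑ p, x p * M.mulVec x p) + ∑ p, (M.mulVec x p)^2 := by
    have e1 : ∀ p ∈ Finset.univ, ((1 + M).mulVec x p)^2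
        = (x p)^2 + 2*(x p * M.mulVec x p) + (M.mulVec x p)^2 := by
      intro p _
      rw [hmv p]; ring
    rw [Finset.sum_congr rfl e1, Finset.sum_add_distrib, Finset.sum_add_distrib,
      ← Finset.mul_sum]
  -- quadratic form bound
  have hquad : ∑ p, x p * M.mulVec x p ≤ D*S + cE*n*S := by
    have hsplit : ∀ p, M.mulVec x p = (Matrix.diagonal d).mulVec x p + E.mulVec x p := by
      intro p
      conv_lhs => rw [hMsplit]
      rw [Matrix.add_mulVec]
      rfl
    have e2 : ∀ p ∈ Finset.univ, x p * M.mulVec x p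
        = x p * (Matrix.diagonal d).mulVec x p + x p * E.mulVec x p := by
      intro p _; rw [hsplit p]; ring
    rw [Finset.sum_congr rfl e2, Finset.sum_add_distrib]
    have hdiag : ∑ p, x p * (Matrix.diagonal d).mulVec x p ≤ D*S := by
      have e3 : ∀ p ∈ Finset.univ, x p * (Matrix.diagonal d).mulVec x p = d p * (x p)^2 := by
        intro p _
        rw [Matrix.mulVec_diagonal]; ring
      rw [Finset.sum_congr rfl e3, hS, Finset.mul_sum]
      exact Finset.sum_le_sum (fun p _ => mul_le_mul_of_nonneg_right (hd p) (sq_nonneg _))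
    have hEq : ∑ p, x p * E.mulVec x p ≤ cE*n*S := quad_le E hcE hE x
    linarith
  have hnorm : ∑ p, (M.mulVec x p)^2 ≤ (cM*n)^2*S := normsq_le M hcM hM x
  have hquad' : S + 2*(∑ p, x p * M.mulVec x p) + ∑ p, (M.mulVec x p)^2
      ≤ (1 + 2*D + 2*(cE*n) + (cM*n)^2) * S := by nlinarith
  calc ∑ p, ((1 + M).mulVec x p)^2
      = S + 2*(∑ p, x p * M.mulVec x p) + ∑ p, (M.mulVec x p)^2 := expand
    _ ≤ (1 + 2*D + 2*(cE*n) + (cM*n)^2) * S := hquad'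
    _ ≤ C^2 * S := mul_le_mul_of_nonneg_right hfin hS0

end AuxNorm

section AuxEst
open Finset
/-- the diagonal values of the rotated generators (below the removed coordinate) -/
def dval (α β : ℝ) : (Fin m ⊕ Fin m) → ℝ :=
  Sum.elim (fun _ => (α + β) / 2) (fun j => if (j : ℕ) = 0 then 0 else (α - β) / 2)

variable {m : ℕ} [NeZero m] {α β : ℝ}

lemma rho_nonneg : 0 ≤ rho α β := le_max_left 0 _
lemma gamma_le_rho : (α + β)/2 ≤ rho α β := le_trans (le_max_left _ _) (le_max_right 0 _)
lemma delta_le_rho : (α - β)/2 ≤ rho α β := le_trans (le_max_right _ _) (le_max_right 0 _)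
lemma rho_le_one (hα1 : |α| ≤ 1) (hβ1 : |β| ≤ 1) : rho α β ≤ 1 := by
  have h1 := abs_le.1 hα1
  have h2 := abs_le.1 hβ1
  refine max_le (by norm_num) (max_le (by linarith [h1.1, h1.2, h2.1, h2.2])
    (by linarith [h1.1, h1.2, h2.1, h2.2]))

lemma dval_le_rho (p : Fin m ⊕ Fin m) : dval α β p ≤ rho α β := by
  rcases p with j | j
  · exact gamma_le_rho
  · show (if (j : ℕ) = 0 then (0:ℝ) else (α - β) / 2) ≤ rho α β
    split_ifs
    · exact rho_nonneg
    · exact delta_le_rho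

lemma abs_dval_le_one (hα1 : |α| ≤ 1) (hβ1 : |β| ≤ 1) (p : Fin m ⊕ Fin m) :
    |dval α β p| ≤ 1 := by
  have h1 := abs_le.1 hα1
  have h2 := abs_le.1 hβ1
  rcases p with j | j
  · show |(α + β)/2| ≤ 1
    rw [abs_le]; constructor <;> linarith
  · show |if (j : ℕ) = 0 then (0:ℝ) else (α - β) / 2| ≤ 1
    split_ifs
    · norm_num
    · rw [abs_le]; constructor <;> linarith

lemma abs_DA_le (hα1 : |α| ≤ 1) (j j' : Fin m) : |DA m α j j'| ≤ 1 := by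
  rw [DA_apply]
  split_ifs
  · norm_num
  · exact hα1
  · norm_num

lemma abs_Gox_le (hα1 : |α| ≤ 1) (hβ1 : |β| ≤ 1) (p q : Fin m ⊕ Fin m) :
    |Gox m α β p q| ≤ 1 := by
  rcases p with j | j <;> rcases q with j' | j' <;>
  · simp only [Gox, Matrix.smul_apply, Matrix.fromBlocks_apply₁₁, Matrix.fromBlocks_apply₁₂,
      Matrix.fromBlocks_apply₂₁, Matrix.fromBlocks_apply₂₂, Matrix.add_apply, Matrix.sub_apply,
      smul_eq_mul]
    have h1 := abs_le.1 (abs_DA_le hα1 j j')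
    have h2 := abs_le.1 (abs_DA_le hβ1 j j')
    rw [abs_le]; constructor <;> nlinarith [h1.1, h1.2, h2.1, h2.2]

lemma abs_Gev_le (hα1 : |α| ≤ 1) (hβ1 : |β| ≤ 1) (p q : Fin m ⊕ Fin m) :
    |Gev m α β p q| ≤ 1 := by
  rcases p with j | j <;> rcases q with j' | j' <;>
  · simp only [Gev, Matrix.smul_apply, Matrix.fromBlocks_apply₁₁, Matrix.fromBlocks_apply₁₂,
      Matrix.fromBlocks_apply₂₁, Matrix.fromBlocks_apply₂₂, Matrix.add_apply, Matrix.sub_apply,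
      Matrix.neg_apply, smul_eq_mul]
    have h1 := abs_le.1 (abs_DA_le hα1 j j')
    have h2 := abs_le.1 (abs_DA_le hβ1 j j')
    rw [abs_le]; constructor <;> nlinarith [h1.1, h1.2, h2.1, h2.2]

/-- key structure lemma: the two-term combination is diagonal up to `u₂ - u₁` errors -/
lemma combo_entry_est (hα1 : |α| ≤ 1) (hβ1 : |β| ≤ 1) {u₁ u₂ : ℝ}
    (hu1 : 0 ≤ u₁) (h12 : u₁ ≤ u₂) (p q : Fin m ⊕ Fin m) (hp : p ≠ Sum.inl 0) :
    |(u₁ • Gox m α β + u₂ • Gev m α β) p q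
      - (if p = q then (u₁ + u₂) * dval α β p else 0)| ≤ u₂ - u₁ := by
  have h1 := abs_le.1 hα1
  have h2 := abs_le.1 hβ1
  rcases p with j | j <;> rcases q with j' | j' <;>
    simp only [Matrix.add_apply, Matrix.smul_apply, Gox, Gev, Matrix.fromBlocks_apply₁₁,
      Matrix.fromBlocks_apply₁₂, Matrix.fromBlocks_apply₂₁, Matrix.fromBlocks_apply₂₂,
      Matrix.sub_apply, Matrix.neg_apply, smul_eq_mul, dval, Sum.elim_inl, Sum.elim_inr]
  · -- inl, inl
    by_cases hjj : j = j'
    · subst hjj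
      have hj0 : (j : ℕ) ≠ 0 := by
        intro hc
        exact hp (by rw [show j = (0 : Fin m) from Fin.ext (by simpa using hc)])
      rw [if_pos rfl, DA_apply, if_pos rfl, if_neg hj0, DA_apply, if_pos rfl, if_neg hj0]
      have : u₁ * (2⁻¹ * (α + β)) + u₂ * (2⁻¹ * (α + β)) - (u₁ + u₂) * ((α + β)/2) = 0 := by
        ring
      rw [this, abs_zero]
      linarith
    · have hne : (Sum.inl j : Fin m ⊕ Fin m) ≠ Sum.inl j' := by
        intro hc; exact hjj (Sum.inl.injEq _ _ ▸ hc)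
      rw [if_neg hne, DA_apply, if_neg hjj, DA_apply, if_neg hjj]
      norm_num; linarith
  · -- inl, inr : never diagonal
    rw [if_neg (by simp)]
    by_cases hjj : j = j'
    · subst hjj
      by_cases hj0 : (j : ℕ) = 0
      · rw [DA_apply, if_pos rfl, if_pos hj0, DA_apply, if_pos rfl, if_pos hj0]
        norm_num; linarith
      · rw [DA_apply, if_pos rfl, if_neg hj0, DA_apply, if_pos rfl, if_neg hj0]
        rw [sub_zero]
        rw [show u₁ * (2⁻¹ * (α - β)) + u₂ * (2⁻¹ * -(α - β)) = (u₁ - u₂) * ((α - β)/2)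
          from by ring]
        rw [abs_mul, abs_sub_comm u₁ u₂, abs_of_nonneg (by linarith : (0:ℝ) ≤ u₂ - u₁)]
        have hd : |(α - β)/2| ≤ 1 := by rw [abs_le]; constructor <;> linarith
        nlinarith [abs_nonneg ((α - β)/2)]
    · rw [DA_apply, if_neg hjj, DA_apply, if_neg hjj]
      norm_num; linarith
  · -- inr, inl
    rw [if_neg (by simp)]
    by_cases hjj : j = j'
    · subst hjj
      rw [sub_zero, DA_apply, if_pos rfl, DA_apply, if_pos rfl]
      rw [show u₁ * (2⁻¹ * ((if (j:ℕ) = 0 then (1:ℝ) else α) + (if (j:ℕ) = 0 then (1:ℝ) else β)))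
          + u₂ * (2⁻¹ * -((if (j:ℕ) = 0 then (1:ℝ) else α) + (if (j:ℕ) = 0 then (1:ℝ) else β)))
          = (u₁ - u₂) * (((if (j:ℕ) = 0 then (1:ℝ) else α) + (if (j:ℕ) = 0 then (1:ℝ) else β))/2)
        from by ring]
      rw [abs_mul, abs_sub_comm u₁ u₂, abs_of_nonneg (by linarith : (0:ℝ) ≤ u₂ - u₁)]
      have hd : |((if (j:ℕ) = 0 then (1:ℝ) else α) + (if (j:ℕ) = 0 then (1:ℝ) else β))/2| ≤ 1 := by
        split_ifs <;> (rw [abs_le]; constructor <;> linarith)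
      nlinarith [abs_nonneg (((if (j:ℕ) = 0 then (1:ℝ) else α) + (if (j:ℕ) = 0 then (1:ℝ) else β))/2)]
    · rw [DA_apply, if_neg hjj, DA_apply, if_neg hjj]
      norm_num; linarith
  · -- inr, inr
    by_cases hjj : j = j'
    · subst hjj
      rw [if_pos rfl, DA_apply, if_pos rfl, DA_apply, if_pos rfl]
      by_cases hj0 : (j : ℕ) = 0
      · rw [if_pos hj0, if_pos hj0, if_pos hj0]
        norm_num; linarith
      · rw [if_neg hj0, if_neg hj0, if_neg hj0]
        rw [show u₁ * (2⁻¹ * (α - β)) + u₂ * (2⁻¹ * (α - β)) - (u₁ + u₂) * ((α - β)/2) = 0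
          from by ring, abs_zero]
        linarith
    · have hne : (Sum.inr j : Fin m ⊕ Fin m) ≠ Sum.inr j' := by
        intro hc; exact hjj (Sum.inr.injEq _ _ ▸ hc)
      rw [if_neg hne, DA_apply, if_neg hjj, DA_apply, if_neg hjj]
      norm_num; linarith

end AuxEst

section AuxPair
open Finset
/-- the junk constant -/
def Kc (m : ℕ) : ℝ := 2*(2*(m:ℝ)+1)*(2*(m:ℝ)) + (2*(m:ℝ))^2*(2*(m:ℝ)+3)^2

lemma Kc_nonneg (m : ℕ) : 0 ≤ Kc m := by rw [Kc]; positivity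

/-- the per-pair bound -/
def pb (m : ℕ) (α β : ℝ) (j : ℕ) : ℝ :=
  (1 + 2*(rho α β)*(2*(j:ℝ)-1)⁻¹) * (1 + Kc m * ((2*(j:ℝ)-1)⁻¹)^2)

lemma one_le_pb (m : ℕ) (α β : ℝ) (j : ℕ) (hj : 1 ≤ j) : 1 ≤ pb m α β j := by
  have hj1 : (1:ℝ) ≤ (j:ℝ) := by exact_mod_cast hj
  have h1 : (0:ℝ) < 2*(j:ℝ)-1 := by linarith
  have h2 : (0:ℝ) ≤ (2*(j:ℝ)-1)⁻¹ := by positivity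
  have h3 : (0:ℝ) ≤ 2*(rho α β)*(2*(j:ℝ)-1)⁻¹ := by
    have := rho_nonneg (α := α) (β := β); positivity
  have h4 : (0:ℝ) ≤ Kc m * ((2*(j:ℝ)-1)⁻¹)^2 := by
    have := Kc_nonneg m; positivity
  rw [pb]
  nlinarith [mul_nonneg h3 h4]

lemma pb_nonneg (m : ℕ) (α β : ℝ) (j : ℕ) (hj : 1 ≤ j) : 0 ≤ pb m α β j :=
  le_trans zero_le_one (one_le_pb m α β j hj)

lemma one_add_mul_one_add {ι : Type*} [Fintype ι] [DecidableEq ι] (A B : Matrix ι ι ℝ) :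
    (1 + A) * (1 + B) = 1 + (A + B + A * B) := by noncomm_ring

lemma lowerSub_one' (m : ℕ) [NeZero m] :
    lowerSub m (1 : Matrix (Fin m ⊕ Fin m) (Fin m ⊕ Fin m) ℝ) = 1 := by
  ext p q
  rw [lowerSub, Matrix.submatrix_apply, Matrix.one_apply, Matrix.one_apply]
  by_cases h : p = q
  · rw [if_pos h, if_pos (by rw [h])]
  · rw [if_neg h, if_neg (fun hc => h (Subtype.ext hc))]

lemma card_sub_le (m : ℕ) [NeZero m] :
    (Fintype.card {i : Fin m ⊕ Fin m // i ≠ Sum.inl 0} : ℝ) ≤ 2*(m:ℝ) := by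
  have h1 : Fintype.card {i : Fin m ⊕ Fin m // i ≠ Sum.inl 0}
      ≤ Fintype.card (Fin m ⊕ Fin m) := Fintype.card_subtype_le _
  have h2 : Fintype.card (Fin m ⊕ Fin m) = m + m := by
    rw [Fintype.card_sum, Fintype.card_fin]
  rw [h2] at h1
  have := (Nat.cast_le (α := ℝ)).2 h1
  push_cast at this
  linarith


lemma pair_arith (mR ρ n u₁ u₂ K : ℝ) (hm : 2 ≤ mR) (hρ0 : 0 ≤ ρ)
    (hu₁ : 0 < u₁) (h12 : u₁ ≤ u₂) (hu₂1 : u₂ ≤ 1) (hsub : u₂ - u₁ = u₁*u₂)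
    (hn0 : 0 ≤ n) (hn : n ≤ 2*mR)
    (hK : K = 2*(2*mR+1)*(2*mR) + (2*mR)^2*(2*mR+3)^2) :
    1 + 2*((u₁+u₂)*ρ) + 2*(((u₂-u₁) + (u₁*u₂)*(2*mR))*n)
      + (((u₁+u₂) + ((u₂-u₁) + (u₁*u₂)*(2*mR)))*n)^2
    ≤ ((1 + 2*ρ*u₂)*(1 + K*u₂^2))^2 := by
  have hu₂ : 0 < u₂ := lt_of_lt_of_le hu₁ h12
  set cE : ℝ := (u₂-u₁) + (u₁*u₂)*(2*mR) with hcE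
  set cM : ℝ := (u₁+u₂) + cE with hcM
  have hcE0 : 0 ≤ cE := by rw [hcE]; nlinarith
  have step1 : 2*((u₁+u₂)*ρ) ≤ 2*(2*ρ*u₂) := by nlinarith
  have step2 : cE ≤ (2*mR+1)*u₂^2 := by
    rw [hcE, hsub]
    nlinarith [mul_le_mul_of_nonneg_right h12 (le_of_lt hu₂)]
  have step3 : cE*n ≤ ((2*mR+1)*u₂^2)*(2*mR) := mul_le_mul step2 hn hn0 (by positivity)
  have step4 : cM ≤ (2*mR+3)*u₂ := by
    rw [hcM]
    have h5 : cE ≤ (2*mR+1)*u₂ := by nlinarith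
    nlinarith
  have hcM0 : 0 ≤ cM := by rw [hcM]; nlinarith
  have step5 : cM*n ≤ ((2*mR+3)*u₂)*(2*mR) := mul_le_mul step4 hn hn0 (by positivity)
  have step6 : (cM*n)^2 ≤ (((2*mR+3)*u₂)*(2*mR))^2 :=
    pow_le_pow_left₀ (mul_nonneg hcM0 hn0) step5 2
  have hjunk : 2*(cE*n) + (cM*n)^2 ≤ K*u₂^2 := by
    rw [hK]; nlinarith [step3, step6]
  have hA0 : 0 ≤ 2*ρ*u₂ := by positivity
  have hB0 : 0 ≤ K*u₂^2 := by nlinarith [sq_nonneg u₂, sq_nonneg mR]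
  have hlast : 1 + 2*(2*ρ*u₂) + K*u₂^2 ≤ ((1 + 2*ρ*u₂)*(1 + K*u₂^2))^2 := by
    set A : ℝ := 2*ρ*u₂
    set B : ℝ := K*u₂^2
    nlinarith [mul_nonneg hA0 hB0, sq_nonneg (A+B), mul_nonneg (mul_nonneg hA0 hB0) hB0,
      mul_nonneg (mul_nonneg hA0 hA0) hB0, sq_nonneg (A*B)]
  linarith

lemma pair_bound (m : ℕ) (hm : 2 ≤ m) [NeZero m] (α β : ℝ)
    (hα1 : |α| ≤ 1) (hβ1 : |β| ≤ 1) (j : ℕ) (hj : 1 ≤ j) :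
    opNorm (lowerSub m (RG m α β (2*j) * RG m α β (2*j-1))) ≤ pb m α β j := by
  set u₁ : ℝ := ((2*j : ℕ) : ℝ)⁻¹ with hu₁def
  set u₂ : ℝ := ((2*j - 1 : ℕ) : ℝ)⁻¹ with hu₂def
  have c₁ : ((2*j : ℕ) : ℝ) = 2*(j:ℝ) := by push_cast; ring
  have c₂ : ((2*j - 1 : ℕ) : ℝ) = 2*(j:ℝ) - 1 := by
    rw [Nat.cast_sub (by omega : 1 ≤ 2*j)]; push_cast; ring
  have hj1 : (1:ℝ) ≤ (j:ℝ) := by exact_mod_cast hj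
  have h2j : (0:ℝ) < 2*(j:ℝ) := by linarith
  have h2j1 : (0:ℝ) < 2*(j:ℝ) - 1 := by linarith
  have hu₁pos : 0 < u₁ := by rw [hu₁def, c₁]; positivity
  have hu₂pos : 0 < u₂ := by rw [hu₂def, c₂]; positivity
  have h12 : u₁ ≤ u₂ := by
    rw [hu₁def, hu₂def, c₁, c₂]
    exact inv_anti₀ h2j1 (by linarith)
  have hu₂1 : u₂ ≤ 1 := by
    rw [hu₂def, c₂]
    rw [inv_le_one_iff₀]; right; linarith
  have hsub : u₂ - u₁ = u₁ * u₂ := by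
    rw [hu₁def, hu₂def, c₁, c₂]
    field_simp
    ring
  -- expand the product
  have hodd : Odd (2*j+1) := by rw [Nat.odd_iff]; omega
  have heven : ¬ Odd (2*j) := by rw [Nat.odd_iff]; omega
  have hidx : 2*j - 1 + 1 = 2*j := by omega
  have hGG1 : GG m α β (2*j+1) = Gox m α β := by rw [GG, if_pos hodd]
  have hGG2 : GG m α β (2*j - 1 + 1) = Gev m α β := by rw [hidx, GG, if_neg heven]
  have hprod : RG m α β (2*j) * RG m α β (2*j-1)
      = 1 + (u₁ • Gox m α β + u₂ • Gev m α β
          + (u₁*u₂) • (Gox m α β * Gev m α β)) := by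
    rw [RG, RG, hGG1, hGG2, one_add_mul_one_add, smul_mul_smul_mat, hu₁def, hu₂def]
  set Mfull : Matrix (Fin m ⊕ Fin m) (Fin m ⊕ Fin m) ℝ :=
    u₁ • Gox m α β + u₂ • Gev m α β + (u₁*u₂) • (Gox m α β * Gev m α β) with hMfull
  have hls : lowerSub m (RG m α β (2*j) * RG m α β (2*j-1)) = 1 + lowerSub m Mfull := by
    rw [hprod]
    have : lowerSub m (1 + Mfull) = lowerSub m 1 + lowerSub m Mfull := rfl
    rw [this, lowerSub_one']
  rw [hls]
  -- apply the master estimate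
  have hρ0 : 0 ≤ rho α β := rho_nonneg
  set n : ℝ := (Fintype.card {i : Fin m ⊕ Fin m // i ≠ Sum.inl 0} : ℝ) with hndef
  have hn0 : (0:ℝ) ≤ n := by rw [hndef]; positivity
  have hn : n ≤ 2*(m:ℝ) := card_sub_le m
  set cE : ℝ := (u₂ - u₁) + (u₁*u₂)*(2*(m:ℝ)) with hcEdef
  set cM : ℝ := (u₁ + u₂) + cE with hcMdef
  have hcE0 : 0 ≤ cE := by
    rw [hcEdef]
    have : 0 ≤ u₂ - u₁ := by linarith
    nlinarith
  have hcM0 : 0 ≤ cM := by rw [hcMdef]; nlinarith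
  have hcard2m : ((Fintype.card (Fin m ⊕ Fin m) : ℕ) : ℝ) ≤ 2*(m:ℝ) := by
    rw [Fintype.card_sum, Fintype.card_fin]; push_cast; linarith
  have hd : ∀ p : {i : Fin m ⊕ Fin m // i ≠ Sum.inl 0},
      (u₁ + u₂) * dval α β p.1 ≤ (u₁ + u₂) * rho α β := fun p =>
    mul_le_mul_of_nonneg_left (dval_le_rho p.1) (by positivity)
  have hdiageq : ∀ p q : {i : Fin m ⊕ Fin m // i ≠ Sum.inl 0},
      Matrix.diagonal (fun p : {i : Fin m ⊕ Fin m // i ≠ Sum.inl 0} =>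
        (u₁ + u₂) * dval α β p.1) p q
      = if p.1 = q.1 then (u₁ + u₂) * dval α β p.1 else 0 := by
    intro p q
    rw [Matrix.diagonal_apply]
    by_cases h : p = q
    · rw [if_pos h, if_pos (by rw [h])]
    · rw [if_neg h, if_neg (fun hc => h (Subtype.ext hc))]
  have hE : ∀ p q : {i : Fin m ⊕ Fin m // i ≠ Sum.inl 0},
      |lowerSub m Mfull p q - Matrix.diagonal (fun p : {i : Fin m ⊕ Fin m // i ≠ Sum.inl 0} =>
        (u₁ + u₂) * dval α β p.1) p q| ≤ cE := by
    intro p q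
    have hentry : lowerSub m Mfull p q
        = (u₁ • Gox m α β + u₂ • Gev m α β) p.1 q.1
          + (u₁*u₂) * (Gox m α β * Gev m α β) p.1 q.1 := rfl
    rw [hentry, hdiageq p q]
    have key := combo_entry_est hα1 hβ1 (le_of_lt hu₁pos) h12 p.1 q.1 p.2
    have hGG : |(u₁*u₂) * (Gox m α β * Gev m α β) p.1 q.1| ≤ (u₁*u₂)*(2*(m:ℝ)) := by
      rw [abs_mul, abs_of_nonneg (by positivity : (0:ℝ) ≤ u₁*u₂)]
      have hme := mul_entry_le (Gox m α β) (Gev m α β) zero_le_one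
        (abs_Gox_le hα1 hβ1) (abs_Gev_le hα1 hβ1) p.1 q.1
      have h2m : |(Gox m α β * Gev m α β) p.1 q.1| ≤ 2*(m:ℝ) := by
        calc |(Gox m α β * Gev m α β) p.1 q.1|
            ≤ (Fintype.card (Fin m ⊕ Fin m)) * (1*1) := hme
          _ ≤ 2*(m:ℝ) := by rw [mul_one, mul_one]; exact hcard2m
      exact mul_le_mul_of_nonneg_left h2m (by positivity)
    calc |(u₁ • Gox m α β + u₂ • Gev m α β) p.1 q.1
          + (u₁*u₂) * (Gox m α β * Gev m α β) p.1 q.1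
          - (if p.1 = q.1 then (u₁ + u₂) * dval α β p.1 else 0)|
        ≤ |(u₁ • Gox m α β + u₂ • Gev m α β) p.1 q.1
            - (if p.1 = q.1 then (u₁ + u₂) * dval α β p.1 else 0)|
          + |(u₁*u₂) * (Gox m α β * Gev m α β) p.1 q.1| := by
          rw [show (u₁ • Gox m α β + u₂ • Gev m α β) p.1 q.1
              + (u₁*u₂) * (Gox m α β * Gev m α β) p.1 q.1
              - (if p.1 = q.1 then (u₁ + u₂) * dval α β p.1 else 0)
            = ((u₁ • Gox m α β + u₂ • Gev m α β) p.1 q.1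
              - (if p.1 = q.1 then (u₁ + u₂) * dval α β p.1 else 0))
              + (u₁*u₂) * (Gox m α β * Gev m α β) p.1 q.1 from by ring]
          exact abs_add_le _ _
      _ ≤ (u₂ - u₁) + (u₁*u₂)*(2*(m:ℝ)) := add_le_add key hGG
      _ = cE := rfl
  have hM : ∀ p q : {i : Fin m ⊕ Fin m // i ≠ Sum.inl 0},
      |lowerSub m Mfull p q| ≤ cM := by
    intro p q
    have h1 := hE p q
    have h2 : |Matrix.diagonal (fun p : {i : Fin m ⊕ Fin m // i ≠ Sum.inl 0} =>
        (u₁ + u₂) * dval α β p.1) p q| ≤ u₁ + u₂ := by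
      rw [hdiageq p q]
      by_cases h : p.1 = q.1
      · rw [if_pos h, abs_mul, abs_of_nonneg (by positivity : (0:ℝ) ≤ u₁ + u₂)]
        nlinarith [abs_dval_le_one hα1 hβ1 p.1, abs_nonneg (dval α β p.1)]
      · rw [if_neg h, abs_zero]; positivity
    calc |lowerSub m Mfull p q|
        = |(lowerSub m Mfull p q - Matrix.diagonal (fun p : {i : Fin m ⊕ Fin m // i ≠ Sum.inl 0} =>
            (u₁ + u₂) * dval α β p.1) p q)
          + Matrix.diagonal (fun p : {i : Fin m ⊕ Fin m // i ≠ Sum.inl 0} =>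
            (u₁ + u₂) * dval α β p.1) p q| := by rw [sub_add_cancel]
      _ ≤ _ + _ := abs_add_le _ _
      _ ≤ cE + (u₁ + u₂) := add_le_add h1 h2
      _ = cM := by rw [hcMdef]; ring
  -- the final numeric inequality
  have hmR : (2:ℝ) ≤ (m:ℝ) := by exact_mod_cast hm
  have hfin : 1 + 2*((u₁ + u₂) * rho α β) + 2*(cE*n) + (cM*n)^2 ≤ (pb m α β j)^2 := by
    have harith := pair_arith (m:ℝ) (rho α β) n u₁ u₂ (Kc m) hmR hρ0 hu₁pos h12 hu₂1 hsub
      hn0 hn (by rw [Kc])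
    have hu₂A : (2*(j:ℝ)-1)⁻¹ = u₂ := by rw [hu₂def, c₂]
    rw [pb, hu₂A, hcMdef, hcEdef]
    exact harith
  exact opNorm_one_add_le (lowerSub m Mfull)
    (fun p => (u₁ + u₂) * dval α β p.1) ((u₁ + u₂) * rho α β) cE cM (pb m α β j)
    (by positivity) hcE0 hcM0 (pb_nonneg m α β j hj) hd hE hM hfin


lemma abs_GG_le {m : ℕ} [NeZero m] {α β : ℝ} (hα1 : |α| ≤ 1) (hβ1 : |β| ≤ 1) (n : ℕ)
    (p q : Fin m ⊕ Fin m) : |GG m α β n p q| ≤ 1 := by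
  rw [GG]
  split_ifs
  · exact abs_Gox_le hα1 hβ1 p q
  · exact abs_Gev_le hα1 hβ1 p q

lemma single_bound (m : ℕ) (hm : 2 ≤ m) [NeZero m] (α β : ℝ)
    (hα1 : |α| ≤ 1) (hβ1 : |β| ≤ 1) (n : ℕ) (hn : 1 ≤ n) :
    opNorm (lowerSub m (RG m α β n)) ≤ 1 + 2*(m:ℝ) := by
  have hmR : (2:ℝ) ≤ (m:ℝ) := by exact_mod_cast hm
  have hcard2m : ((Fintype.card {i : Fin m ⊕ Fin m // i ≠ Sum.inl 0} : ℕ) : ℝ) ≤ 2*(m:ℝ) :=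
    card_sub_le m
  have hls : lowerSub m (RG m α β n) = 1 + lowerSub m (((n:ℝ))⁻¹ • GG m α β (n+1)) := by
    rw [RG]
    have : lowerSub m (1 + ((n:ℝ))⁻¹ • GG m α β (n+1))
        = lowerSub m 1 + lowerSub m (((n:ℝ))⁻¹ • GG m α β (n+1)) := rfl
    rw [this, lowerSub_one']
  rw [hls]
  have hnR : (1:ℝ) ≤ (n:ℝ) := by exact_mod_cast hn
  have hninv : ((n:ℝ))⁻¹ ≤ 1 := by
    rw [inv_le_one_iff₀]; right; linarith
  have hninv0 : (0:ℝ) ≤ ((n:ℝ))⁻¹ := by positivity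
  have hEnt : ∀ p q : {i : Fin m ⊕ Fin m // i ≠ Sum.inl 0},
      |lowerSub m (((n:ℝ))⁻¹ • GG m α β (n+1)) p q| ≤ 1 := by
    intro p q
    have he : lowerSub m (((n:ℝ))⁻¹ • GG m α β (n+1)) p q
        = ((n:ℝ))⁻¹ * GG m α β (n+1) p.1 q.1 := rfl
    rw [he, abs_mul, abs_of_nonneg hninv0]
    calc ((n:ℝ))⁻¹ * |GG m α β (n+1) p.1 q.1| ≤ 1 * 1 :=
      mul_le_mul hninv (abs_GG_le hα1 hβ1 (n+1) p.1 q.1) (abs_nonneg _) zero_le_one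
    _ = 1 := by norm_num
  apply opNorm_one_add_le _ (fun _ => (0:ℝ)) 0 1 1 (1 + 2*(m:ℝ)) le_rfl zero_le_one zero_le_one
    (by linarith) (fun _ => le_rfl)
  · intro p q
    have hd0 : Matrix.diagonal (fun _ : {i : Fin m ⊕ Fin m // i ≠ Sum.inl 0} => (0:ℝ)) p q
        = 0 := by
      rw [Matrix.diagonal_apply]
      split_ifs <;> rfl
    rw [hd0, sub_zero]
    exact hEnt p q
  · exact hEnt
  · have h0 : (0:ℝ) ≤ ((Fintype.card {i : Fin m ⊕ Fin m // i ≠ Sum.inl 0} : ℕ) : ℝ) := by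
      positivity
    nlinarith
-- ==== new ====

lemma RPi_lt (m : ℕ) (α β : ℝ) (l n : ℕ) (h : n < l) : RPi m α β l n = 1 := by
  cases n with
  | zero => rfl
  | succ k => rw [RPi, if_pos h]

lemma RPi_succ (m : ℕ) (α β : ℝ) (l n : ℕ) (h : l ≤ n + 1) :
    RPi m α β l (n + 1) = RG m α β (n + 1) * RPi m α β l n := by
  rw [RPi, if_neg (by omega)]

/-- unfolding two steps of the product -/
lemma RPi_two_step (m : ℕ) (α β : ℝ) (l : ℕ) (k : ℕ) (hl : l ≤ 2*k - 1) (hk : 1 ≤ k) :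
    RPi m α β l (2*k) = (RG m α β (2*k) * RG m α β (2*k-1)) * RPi m α β l (2*k - 2) := by
  obtain ⟨t, ht⟩ : ∃ t, 2*k = t + 1 + 1 := ⟨2*k - 2, by omega⟩
  rw [ht, RPi_succ m α β l (t+1) (by omega), RPi_succ m α β l t (by omega),
    show t + 1 + 1 - 1 = t + 1 from by omega, show t + 1 + 1 - 2 = t from by omega,
    Matrix.mul_assoc]

lemma bound_odd (m : ℕ) (hm : 2 ≤ m) [NeZero m] (α β : ℝ)
    (hα1 : |α| ≤ 1) (hβ1 : |β| ≤ 1) (l : ℕ) (hl : 1 ≤ l) :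
    ∀ k, l ≤ k → opNorm (lowerSub m (RPi m α β (2*l - 1) (2*k)))
      ≤ ∏ j ∈ Finset.Icc l k, pb m α β j := by
  intro k hk
  induction k, hk using Nat.le_induction with
  | base =>
    rw [RPi_two_step m α β (2*l-1) l (by omega) hl,
      RPi_lt m α β (2*l-1) (2*l-2) (by omega), Matrix.mul_one, Finset.Icc_self,
      Finset.prod_singleton]
    exact pair_bound m hm α β hα1 hβ1 l hl
  | succ k hk ih =>
    rw [RPi_two_step m α β (2*l-1) (k+1) (by omega) (by omega),
      show 2*(k+1) - 2 = 2*k from by omega,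
      lowerSub_mul m (RowOK_RPi m α β (2*l-1) (2*k)),
      Finset.prod_Icc_succ_top (by omega : l ≤ k + 1)]
    calc opNorm (lowerSub m (RG m α β (2*(k+1)) * RG m α β (2*(k+1)-1)) *
          lowerSub m (RPi m α β (2*l-1) (2*k)))
        ≤ opNorm (lowerSub m (RG m α β (2*(k+1)) * RG m α β (2*(k+1)-1))) *
          opNorm (lowerSub m (RPi m α β (2*l-1) (2*k))) := opNorm_mul_le _ _
      _ ≤ pb m α β (k+1) * ∏ j ∈ Finset.Icc l k, pb m α β j := by
          apply mul_le_mul (pair_bound m hm α β hα1 hβ1 (k+1) (by omega)) ih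
            (opNorm_nonneg _) (pb_nonneg m α β (k+1) (by omega))
      _ = (∏ j ∈ Finset.Icc l k, pb m α β j) * pb m α β (k+1) := by ring

lemma bound_even (m : ℕ) (hm : 2 ≤ m) [NeZero m] (α β : ℝ)
    (hα1 : |α| ≤ 1) (hβ1 : |β| ≤ 1) (l : ℕ) (hl : 1 ≤ l) :
    ∀ k, l ≤ k → opNorm (lowerSub m (RPi m α β (2*l) (2*k)))
      ≤ (1 + 2*(m:ℝ)) * ∏ j ∈ Finset.Icc (l+1) k, pb m α β j := by
  intro k hk
  induction k, hk using Nat.le_induction with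
  | base =>
    obtain ⟨t, ht⟩ : ∃ t, 2*l = t + 1 := ⟨2*l - 1, by omega⟩
    rw [Finset.Icc_eq_empty (by omega : ¬ l + 1 ≤ l), Finset.prod_empty, mul_one, ht,
      RPi_succ m α β (t+1) t (by omega), RPi_lt m α β (t+1) t (by omega), Matrix.mul_one,
      ← ht]
    exact single_bound m hm α β hα1 hβ1 (2*l) (by omega)
  | succ k hk ih =>
    rw [RPi_two_step m α β (2*l) (k+1) (by omega) (by omega),
      show 2*(k+1) - 2 = 2*k from by omega,
      lowerSub_mul m (RowOK_RPi m α β (2*l) (2*k)),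
      Finset.prod_Icc_succ_top (by omega : l + 1 ≤ k + 1), ← mul_assoc]
    calc opNorm (lowerSub m (RG m α β (2*(k+1)) * RG m α β (2*(k+1)-1)) *
          lowerSub m (RPi m α β (2*l) (2*k)))
        ≤ opNorm (lowerSub m (RG m α β (2*(k+1)) * RG m α β (2*(k+1)-1))) *
          opNorm (lowerSub m (RPi m α β (2*l) (2*k))) := opNorm_mul_le _ _
      _ ≤ pb m α β (k+1) * ((1 + 2*(m:ℝ)) * ∏ j ∈ Finset.Icc (l+1) k, pb m α β j) := by
          apply mul_le_mul (pair_bound m hm α β hα1 hβ1 (k+1) (by omega)) ih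
            (opNorm_nonneg _) (pb_nonneg m α β (k+1) (by omega))
      _ = (1 + 2*(m:ℝ)) * (∏ j ∈ Finset.Icc (l+1) k, pb m α β j) * pb m α β (k+1) := by
          ring

lemma sum_inv_sq (k : ℕ) (hk : 1 ≤ k) :
    ∑ j ∈ Finset.Icc 1 k, ((j:ℝ))⁻¹^2 ≤ 2 - ((k:ℝ))⁻¹ := by
  induction k, hk using Nat.le_induction with
  | base => norm_num
  | succ k hk ih =>
    rw [Finset.sum_Icc_succ_top (by omega : 1 ≤ k + 1)]
    have hkR : (1:ℝ) ≤ (k:ℝ) := by exact_mod_cast hk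
    have h1 : (0:ℝ) < (k:ℝ) := by linarith
    have h2 : (0:ℝ) < ((k:ℝ)+1) := by linarith
    have key : ((k:ℝ)+1)⁻¹^2 ≤ ((k:ℝ))⁻¹ - ((k:ℝ)+1)⁻¹ := by
      have e1 : ((k:ℝ))⁻¹ - ((k:ℝ)+1)⁻¹ = (((k:ℝ))*((k:ℝ)+1))⁻¹ := by
        field_simp
        ring
      have e2 : ((k:ℝ)+1)⁻¹^2 = ((((k:ℝ))+1)*(((k:ℝ))+1))⁻¹ := by
        rw [sq, mul_inv]
      rw [e1, e2]
      apply inv_anti₀ (by nlinarith) (by nlinarith)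
    push_cast at ih ⊢
    linarith

lemma prod_pb_le (m : ℕ) (α β : ℝ) (l k : ℕ) (hl : 1 ≤ l) (hk : l ≤ k) :
    ∏ j ∈ Finset.Icc l k, pb m α β j ≤ Real.exp (2 * Kc m) * lam l k (rho α β) := by
  have hfact : ∀ j ∈ Finset.Icc l k, pb m α β j
      = ((2 * (j : ℝ) - 1 + 2 * rho α β) / (2 * (j : ℝ) - 1))
        * (1 + Kc m * ((2*(j:ℝ)-1)⁻¹)^2) := by
    intro j hj
    have hj1 : 1 ≤ j := le_trans hl (Finset.mem_Icc.1 hj).1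
    have hjR : (1:ℝ) ≤ (j:ℝ) := by exact_mod_cast hj1
    have hne : (2*(j:ℝ)-1) ≠ 0 := by intro hc; nlinarith
    rw [pb]
    congr 1
    field_simp
  rw [Finset.prod_congr rfl hfact, Finset.prod_mul_distrib, lam]
  have h1 : ∏ j ∈ Finset.Icc l k, (1 + Kc m * ((2*(j:ℝ)-1)⁻¹)^2) ≤ Real.exp (2 * Kc m) := by
    calc ∏ j ∈ Finset.Icc l k, (1 + Kc m * ((2*(j:ℝ)-1)⁻¹)^2)
        ≤ ∏ j ∈ Finset.Icc l k, Real.exp (Kc m * ((2*(j:ℝ)-1)⁻¹)^2) := by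
          apply Finset.prod_le_prod
          · intro j hj
            have hj1 : 1 ≤ j := le_trans hl (Finset.mem_Icc.1 hj).1
            have hjR : (1:ℝ) ≤ (j:ℝ) := by exact_mod_cast hj1
            have : (0:ℝ) ≤ Kc m * ((2*(j:ℝ)-1)⁻¹)^2 := by
              have := Kc_nonneg m; positivity
            linarith
          · intro j hj
            have := Real.add_one_le_exp (Kc m * ((2*(j:ℝ)-1)⁻¹)^2)
            linarith
      _ = Real.exp (∑ j ∈ Finset.Icc l k, Kc m * ((2*(j:ℝ)-1)⁻¹)^2) :=
          (Real.exp_sum _ _).symm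
      _ ≤ Real.exp (2 * Kc m) := by
          apply Real.exp_le_exp.2
          have hsum : ∑ j ∈ Finset.Icc l k, ((2*(j:ℝ)-1)⁻¹)^2 ≤ 2 := by
            calc ∑ j ∈ Finset.Icc l k, ((2*(j:ℝ)-1)⁻¹)^2
                ≤ ∑ j ∈ Finset.Icc l k, ((j:ℝ))⁻¹^2 := by
                  apply Finset.sum_le_sum
                  intro j hj
                  have hj1 : 1 ≤ j := le_trans hl (Finset.mem_Icc.1 hj).1
                  have hjR : (1:ℝ) ≤ (j:ℝ) := by exact_mod_cast hj1
                  have h1 : (0:ℝ) < (j:ℝ) := by linarith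
                  have h2 : (j:ℝ) ≤ 2*(j:ℝ)-1 := by linarith
                  have h3 : (2*(j:ℝ)-1)⁻¹ ≤ ((j:ℝ))⁻¹ := by
                    apply inv_anti₀ h1 h2
                  have h4 : (0:ℝ) ≤ (2*(j:ℝ)-1)⁻¹ := by
                    apply inv_nonneg.2; linarith
                  exact pow_le_pow_left₀ h4 h3 2
              _ ≤ ∑ j ∈ Finset.Icc 1 k, ((j:ℝ))⁻¹^2 := by
                  apply Finset.sum_le_sum_of_subset_of_nonneg
                  · apply Finset.Icc_subset_Icc_left hl
                  · intro j _ _; positivity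
              _ ≤ 2 - ((k:ℝ))⁻¹ := sum_inv_sq k (le_trans hl hk)
              _ ≤ 2 := by
                  have : (0:ℝ) ≤ ((k:ℝ))⁻¹ := by positivity
                  linarith
          rw [← Finset.mul_sum]
          nlinarith [Kc_nonneg m]
  have h2 : (0:ℝ) ≤ ∏ j ∈ Finset.Icc l k, (2 * (j : ℝ) - 1 + 2 * rho α β) / (2 * (j : ℝ) - 1) := by
    apply Finset.prod_nonneg
    intro j hj
    have hj1 : 1 ≤ j := le_trans hl (Finset.mem_Icc.1 hj).1
    have hjR : (1:ℝ) ≤ (j:ℝ) := by exact_mod_cast hj1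
    have := rho_nonneg (α := α) (β := β)
    apply div_nonneg (by linarith) (by linarith)
  calc (∏ j ∈ Finset.Icc l k, (2 * (j : ℝ) - 1 + 2 * rho α β) / (2 * (j : ℝ) - 1))
        * ∏ j ∈ Finset.Icc l k, (1 + Kc m * ((2*(j:ℝ)-1)⁻¹)^2)
      ≤ (∏ j ∈ Finset.Icc l k, (2 * (j : ℝ) - 1 + 2 * rho α β) / (2 * (j : ℝ) - 1))
        * Real.exp (2 * Kc m) := mul_le_mul_of_nonneg_left h1 h2
    _ = Real.exp (2 * Kc m) * ∏ j ∈ Finset.Icc l k, (2 * (j : ℝ) - 1 + 2 * rho α β) / (2 * (j : ℝ) - 1) := by ring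

lemma one_le_lam (α β : ℝ) (l k : ℕ) (hl : 1 ≤ l) : 1 ≤ lam l k (rho α β) := by
  rw [lam]
  calc (1:ℝ) = ∏ _j ∈ Finset.Icc l k, (1:ℝ) := by rw [Finset.prod_const_one]
    _ ≤ ∏ i ∈ Finset.Icc l k, (2 * (i : ℝ) - 1 + 2 * rho α β) / (2 * (i : ℝ) - 1) := by
      apply Finset.prod_le_prod
      · intro j hj; norm_num
      · intro j hj
        have hj1 : 1 ≤ j := le_trans hl (Finset.mem_Icc.1 hj).1
        have hjR : (1:ℝ) ≤ (j:ℝ) := by exact_mod_cast hj1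
        have h1 : (0:ℝ) < 2*(j:ℝ)-1 := by linarith
        rw [le_div_iff₀ h1]
        have := rho_nonneg (α := α) (β := β)
        linarith

end AuxPair


end Dipole
open Dipole in
/-- **Lemma 3.4 (operator-norm bounds for the reduced products `Π_{2k,2l−1}` and `Π_{2k,2l}`).**
There is a constant `C > 0` such that for all `k ≥ l ≥ 1`,
`‖(Pᵀ Π_{2k,2l−1} P)_{2:2m,2:2m}‖_op ≤ C λ_{k,l}(ρ)` and
`‖(Pᵀ Π_{2k,2l} P)_{2:2m,2:2m}‖_op ≤ C λ_{k,l}(ρ)`. -/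
theorem Dipole.Pimat_opNorm_bound
    (m : ℕ) (hm : 2 ≤ m) [NeZero m] (α β : ℝ)
    (hα : α ∈ Set.Icc (-(1 / ((m : ℝ) - 1))) 1)
    (hβ : β ∈ Set.Icc (-(1 / ((m : ℝ) - 1))) 1) :
    ∃ C : ℝ, 0 < C ∧ ∀ k l : ℕ, 1 ≤ l → l ≤ k →
      opNorm (lowerSub m ((Pmat m)ᵀ * Pimat m α β (2 * l - 1) (2 * k) * Pmat m)) ≤
        C * lam l k (rho α β) ∧
      opNorm (lowerSub m ((Pmat m)ᵀ * Pimat m α β (2 * l) (2 * k) * Pmat m)) ≤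
        C * lam l k (rho α β) := by
  have hmR : (2:ℝ) ≤ (m:ℝ) := by exact_mod_cast hm
  have hm1 : 1 ≤ m := by omega
  have hα1 : |α| ≤ 1 := by
    obtain ⟨ha1, ha2⟩ := hα
    have hdiv : 1/((m:ℝ)-1) ≤ 1 := by
      rw [div_le_one (by linarith)]; linarith
    rw [abs_le]; constructor <;> linarith
  have hβ1 : |β| ≤ 1 := by
    obtain ⟨hb1, hb2⟩ := hβ
    have hdiv : 1/((m:ℝ)-1) ≤ 1 := by
      rw [div_le_one (by linarith)]; linarith
    refine abs_le.2 ⟨by linarith, hb2⟩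
  refine ⟨(1 + 2*(m:ℝ)) * Real.exp (2 * Kc m), by positivity, ?_⟩
  intro k l hl hlk
  have hlam0 : (0:ℝ) ≤ lam l k (rho α β) :=
    le_trans zero_le_one (one_le_lam α β l k hl)
  have hexp0 : (0:ℝ) ≤ Real.exp (2 * Kc m) := le_of_lt (Real.exp_pos _)
  constructor
  · rw [Pt_Pimat_P m hm1 α β (2*l-1) (2*k)]
    calc opNorm (lowerSub m (RPi m α β (2*l-1) (2*k)))
        ≤ ∏ j ∈ Finset.Icc l k, pb m α β j := bound_odd m hm α β hα1 hβ1 l hl k hlk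
      _ ≤ Real.exp (2 * Kc m) * lam l k (rho α β) := prod_pb_le m α β l k hl hlk
      _ ≤ (1 + 2*(m:ℝ)) * Real.exp (2 * Kc m) * lam l k (rho α β) := by
          have h1 : Real.exp (2 * Kc m) ≤ (1 + 2*(m:ℝ)) * Real.exp (2 * Kc m) := by
            nlinarith
          exact mul_le_mul_of_nonneg_right h1 hlam0
  · rw [Pt_Pimat_P m hm1 α β (2*l) (2*k)]
    calc opNorm (lowerSub m (RPi m α β (2*l) (2*k)))
        ≤ (1 + 2*(m:ℝ)) * ∏ j ∈ Finset.Icc (l+1) k, pb m α β j :=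
          bound_even m hm α β hα1 hβ1 l hl k hlk
      _ ≤ (1 + 2*(m:ℝ)) * ∏ j ∈ Finset.Icc l k, pb m α β j := by
          apply mul_le_mul_of_nonneg_left ?_ (by linarith)
          have hins : Finset.Icc l k = insert l (Finset.Icc (l+1) k) := by
            ext j
            simp only [Finset.mem_Icc, Finset.mem_insert]
            omega
          have hnotin : l ∉ Finset.Icc (l+1) k := by simp
          have hrest0 : (0:ℝ) ≤ ∏ j ∈ Finset.Icc (l+1) k, pb m α β j :=
            Finset.prod_nonneg (fun j hj =>
              pb_nonneg m α β j (by have := (Finset.mem_Icc.1 hj).1; omega))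
          rw [hins, Finset.prod_insert hnotin]
          exact le_mul_of_one_le_left hrest0 (one_le_pb m α β l hl)
      _ ≤ (1 + 2*(m:ℝ)) * (Real.exp (2 * Kc m) * lam l k (rho α β)) :=
          mul_le_mul_of_nonneg_left (prod_pb_le m α β l k hl hlk) (by linarith)
      _ = (1 + 2*(m:ℝ)) * Real.exp (2 * Kc m) * lam l k (rho α β) := by ring
end
end

section
/- There exists a constant C > 0 such that for every 2m×2m real symmetric positive-semidefinite matrix E whose first row and first column are zero, all integers k ≥ l ≥ 1, and each i ∈ {2l−1, 2l}, one has trace((P^T Π_{2k,i} P) · E · (P^T Π_{2k,i} P)^T) ≤ C · λ_{k,l}(ρ)² · trace(E). -/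
open Matrix

noncomputable section

attribute [local instance] Classical.propDecidable

namespace DipoleAux

open scoped Matrix.Norms.L2Operator

variable {ι : Type*} [Fintype ι] [DecidableEq ι]

lemma norm_matrix_eq (M : Matrix ι ι ℝ) :
    ‖M‖ = ‖Matrix.toEuclideanCLM (𝕜 := ℝ) M‖ := Matrix.cstar_norm_def M

lemma euclidean_apply (M : Matrix ι ι ℝ) (v : ι → ℝ) :
    (Matrix.toEuclideanCLM (𝕜 := ℝ) M) ((WithLp.equiv 2 _).symm v)
      = (WithLp.equiv 2 _).symm (M.mulVec v) := by
  rw [WithLp.equiv_symm_apply, Matrix.toEuclideanCLM_toLp]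

lemma norm_symm_eq (v : ι → ℝ) :
    ‖((WithLp.equiv 2 (ι → ℝ)).symm v : EuclideanSpace ℝ ι)‖
      = Real.sqrt (∑ j, v j ^ 2) := by
  rw [EuclideanSpace.norm_eq]
  congr 1
  refine Finset.sum_congr rfl fun j _ => ?_
  rw [Real.norm_eq_abs, sq_abs]
  rfl

lemma normsq_mulVec_le (M : Matrix ι ι ℝ) (v : ι → ℝ) :
    ∑ j, (M.mulVec v j) ^ 2 ≤ ‖M‖ ^ 2 * ∑ j, v j ^ 2 := by
  have h1 : ‖(Matrix.toEuclideanCLM (𝕜 := ℝ) M) ((WithLp.equiv 2 _).symm v)‖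
      ≤ ‖M‖ * ‖((WithLp.equiv 2 (ι → ℝ)).symm v : EuclideanSpace ℝ ι)‖ := by
    rw [norm_matrix_eq]
    exact (Matrix.toEuclideanCLM (𝕜 := ℝ) M).le_opNorm _
  rw [euclidean_apply, norm_symm_eq, norm_symm_eq] at h1
  calc ∑ j, (M.mulVec v j) ^ 2
      = Real.sqrt (∑ j, (M.mulVec v j) ^ 2) ^ 2 := (Real.sq_sqrt (by positivity)).symm
    _ ≤ (‖M‖ * Real.sqrt (∑ j, v j ^ 2)) ^ 2 := by
        apply pow_le_pow_left₀ (Real.sqrt_nonneg _) h1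
    _ = ‖M‖ ^ 2 * ∑ j, v j ^ 2 := by
        rw [mul_pow, Real.sq_sqrt (by positivity)]

open scoped MatrixOrder in
lemma trace_conj_le (M E : Matrix ι ι ℝ) (hE : E.PosSemidef) :
    Matrix.trace (M * E * Mᵀ) ≤ ‖M‖ ^ 2 * Matrix.trace E := by
  obtain ⟨B, hB⟩ := CStarAlgebra.nonneg_iff_eq_star_mul_self.mp hE.nonneg
  have hB' : E = Bᵀ * B := by simpa [Matrix.star_eq_conjTranspose] using hB
  subst hB'
  have h1 : M * (Bᵀ * B) * Mᵀ = (B * Mᵀ)ᵀ * (B * Mᵀ) := by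
    rw [Matrix.transpose_mul, Matrix.transpose_transpose]
    noncomm_ring
  have h2 : Matrix.trace ((B * Mᵀ)ᵀ * (B * Mᵀ)) = ∑ i, ∑ j, ((B * Mᵀ) i j) ^ 2 := by
    rw [Matrix.trace]
    simp only [Matrix.diag, Matrix.mul_apply, Matrix.transpose_apply, sq]
    rw [Finset.sum_comm]
  have h3 : Matrix.trace (Bᵀ * B) = ∑ i, ∑ j, (B i j) ^ 2 := by
    rw [Matrix.trace]
    simp only [Matrix.diag, Matrix.mul_apply, Matrix.transpose_apply, sq]
    rw [Finset.sum_comm]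
  rw [h1, h2, h3, Finset.mul_sum]
  refine Finset.sum_le_sum fun i _ => ?_
  have h4 : ∀ j, (B * Mᵀ) i j = M.mulVec (fun k => B i k) j := by
    intro j
    simp [Matrix.mul_apply, Matrix.mulVec, dotProduct, mul_comm]
  calc ∑ j, ((B * Mᵀ) i j) ^ 2 = ∑ j, (M.mulVec (fun k => B i k) j) ^ 2 := by
        refine Finset.sum_congr rfl fun j _ => by rw [h4]
    _ ≤ ‖M‖ ^ 2 * ∑ j, B i j ^ 2 := normsq_mulVec_le M _

lemma norm_diagonal_le (d : ι → ℝ) (c : ℝ) (hc : 0 ≤ c) (h : ∀ i, |d i| ≤ c) :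
    ‖Matrix.diagonal d‖ ≤ c := by
  rw [norm_matrix_eq]
  refine ContinuousLinearMap.opNorm_le_bound _ hc fun x => ?_
  have hx : x = (WithLp.equiv 2 (ι → ℝ)).symm (fun i => x i) := rfl
  rw [hx, euclidean_apply, norm_symm_eq, norm_symm_eq]
  have h1 : ∑ j, ((Matrix.diagonal d).mulVec (fun i => x i) j) ^ 2
      ≤ c ^ 2 * ∑ j, (x j) ^ 2 := by
    rw [Finset.mul_sum]
    refine Finset.sum_le_sum fun j _ => ?_
    rw [Matrix.mulVec_diagonal]
    calc (d j * x j) ^ 2 = (d j) ^ 2 * (x j) ^ 2 := by ring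
      _ ≤ c ^ 2 * (x j) ^ 2 := by
          apply mul_le_mul_of_nonneg_right _ (sq_nonneg _)
          calc (d j)^2 = |d j|^2 := (sq_abs _).symm
            _ ≤ c ^ 2 := pow_le_pow_left₀ (abs_nonneg _) (h j) 2
  calc Real.sqrt (∑ j, ((Matrix.diagonal d).mulVec (fun i => x i) j) ^ 2)
      ≤ Real.sqrt (c ^ 2 * ∑ j, (x j) ^ 2) := Real.sqrt_le_sqrt h1
    _ = c * Real.sqrt (∑ j, (x j) ^ 2) := by
        rw [Real.sqrt_mul (sq_nonneg _), Real.sqrt_sq hc]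

lemma norm_one_le : ‖(1 : Matrix ι ι ℝ)‖ ≤ 1 := by
  rw [norm_matrix_eq, _root_.map_one]
  exact ContinuousLinearMap.norm_id_le

lemma norm_affine_le (c : ℝ) (hc0 : 0 ≤ c) (hc1 : c ≤ 1) (K : Matrix ι ι ℝ) :
    ‖(1 : Matrix ι ι ℝ) + c • K‖ ≤ 1 + ‖K‖ := by
  calc ‖(1 : Matrix ι ι ℝ) + c • K‖ ≤ ‖(1 : Matrix ι ι ℝ)‖ + ‖c • K‖ := norm_add_le _ _
    _ ≤ 1 + ‖K‖ := by
        apply add_le_add norm_one_le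
        rw [norm_smul, Real.norm_eq_abs, abs_of_nonneg hc0]
        calc c * ‖K‖ ≤ 1 * ‖K‖ := mul_le_mul_of_nonneg_right hc1 (norm_nonneg _)
          _ = ‖K‖ := one_mul _

end DipoleAux

namespace DipoleAux2

open Dipole
open scoped Matrix.Norms.L2Operator

variable (m : ℕ) [NeZero m] (α β : ℝ)

lemma sum_if_lt (b : Fin m) (w : ℝ) :
    ∑ k : Fin m, (if (k : ℕ) < (b : ℕ) then w else 0) = (b : ℕ) * w := by
  rw [Fin.sum_univ_eq_sum_range (fun k => if k < (b : ℕ) then w else 0)]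
  rw [← Finset.sum_filter]
  have hf : (Finset.range m).filter (fun k => k < (b : ℕ)) = Finset.range (b : ℕ) := by
    ext k
    simp only [Finset.mem_filter, Finset.mem_range]
    constructor
    · exact fun h => h.2
    · exact fun h => ⟨lt_trans h b.isLt, h⟩
  rw [hf, Finset.sum_const, Finset.card_range, nsmul_eq_mul]

lemma sum_if_eq (b : Fin m) (w : ℝ) :
    ∑ k : Fin m, (if (k : ℕ) = (b : ℕ) then w else 0) = w := by
  have : ∀ k : Fin m, (if (k : ℕ) = (b : ℕ) then w else 0) = (if k = b then w else 0) := by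
    intro k
    congr 1
    simp [Fin.ext_iff]
  simp only [this]
  simp

lemma col_sum (b : Fin m) (hb : (b : ℕ) ≠ 0) (w : ℝ) :
    ∑ k : Fin m, (if (k : ℕ) < (b : ℕ) then w
      else if (k : ℕ) = (b : ℕ) then -((b : ℕ) : ℝ) * w else 0) = 0 := by
  have hsplit : ∀ k : Fin m,
      (if (k : ℕ) < (b : ℕ) then w
        else if (k : ℕ) = (b : ℕ) then -((b : ℕ) : ℝ) * w else 0)
      = (if (k : ℕ) < (b : ℕ) then w else 0)
        + (if (k : ℕ) = (b : ℕ) then -((b : ℕ) : ℝ) * w else 0) := by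
    intro k
    split_ifs with h1 h2 <;> first | ring1 | (exfalso; omega)
  simp only [hsplit]
  rw [Finset.sum_add_distrib, sum_if_lt, sum_if_eq]
  ring

/-- off-diagonal entries of `QᵀQ` vanish -/
lemma Q_offdiag (a b : Fin m) (hb : (b : ℕ) ≠ 0) (hab : (a : ℕ) < (b : ℕ)) :
    ∑ k : Fin m, Qmat m k a * Qmat m k b = 0 := by
  by_cases ha : (a : ℕ) = 0
  · have hpt : ∀ k : Fin m, Qmat m k a * Qmat m k b
        = (if (k : ℕ) < (b : ℕ) then (Real.sqrt m)⁻¹ * (Real.sqrt ((b : ℕ) * ((b : ℕ) + 1 : ℕ)))⁻¹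
          else if (k : ℕ) = (b : ℕ) then
            -((b : ℕ) : ℝ) * ((Real.sqrt m)⁻¹ * (Real.sqrt ((b : ℕ) * ((b : ℕ) + 1 : ℕ)))⁻¹)
          else 0) := by
      intro k
      simp only [Qmat, Matrix.of_apply]
      split_ifs <;> first | ring1 | (exfalso; omega)
    simp only [hpt]
    exact col_sum m b hb _
  · have hpt : ∀ k : Fin m, Qmat m k a * Qmat m k b
        = (if (k : ℕ) < (a : ℕ) then
            (Real.sqrt ((a : ℕ) * ((a : ℕ) + 1 : ℕ)))⁻¹ * (Real.sqrt ((b : ℕ) * ((b : ℕ) + 1 : ℕ)))⁻¹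
          else if (k : ℕ) = (a : ℕ) then
            -((a : ℕ) : ℝ) * ((Real.sqrt ((a : ℕ) * ((a : ℕ) + 1 : ℕ)))⁻¹
              * (Real.sqrt ((b : ℕ) * ((b : ℕ) + 1 : ℕ)))⁻¹)
          else 0) := by
      intro k
      simp only [Qmat, Matrix.of_apply]
      split_ifs <;> first | ring1 | (exfalso; omega)
    simp only [hpt]
    exact col_sum m a ha _

lemma Q_diag (a : Fin m) : ∑ k : Fin m, Qmat m k a * Qmat m k a = 1 := by
  by_cases ha : (a : ℕ) = 0
  · have hpt : ∀ k : Fin m, Qmat m k a * Qmat m k a = (Real.sqrt m)⁻¹ * (Real.sqrt m)⁻¹ := by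
      intro k
      simp only [Qmat, Matrix.of_apply, if_pos ha]
    simp only [hpt]
    rw [Finset.sum_const, Finset.card_univ, Fintype.card_fin, nsmul_eq_mul]
    have hm : (0 : ℝ) < m := by
      have := m.pos_of_neZero
      exact_mod_cast this
    rw [← mul_inv, Real.mul_self_sqrt (le_of_lt hm)]
    field_simp
  · set v : ℝ := (Real.sqrt ((a : ℕ) * ((a : ℕ) + 1 : ℕ)))⁻¹ with hv
    have hpt : ∀ k : Fin m, Qmat m k a * Qmat m k a
        = (if (k : ℕ) < (a : ℕ) then v * v else 0)
          + (if (k : ℕ) = (a : ℕ) then ((a : ℕ) : ℝ) ^ 2 * (v * v) else 0) := by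
      intro k
      simp only [Qmat, Matrix.of_apply, ← hv]
      split_ifs <;> first | ring1 | (exfalso; omega)
    simp only [hpt]
    rw [Finset.sum_add_distrib, sum_if_lt, sum_if_eq]
    have hA : (0 : ℝ) < ((a : ℕ) : ℝ) := by
      have : 0 < (a : ℕ) := Nat.pos_of_ne_zero ha
      exact_mod_cast this
    have hvv : v * v = (((a : ℕ) : ℝ) * (((a : ℕ) : ℝ) + 1))⁻¹ := by
      rw [hv, ← mul_inv]
      rw [Real.mul_self_sqrt (by positivity)]
      push_cast
      ring_nf
    rw [hvv]
    field_simp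
    ring

lemma QtQ : (Qmat m)ᵀ * Qmat m = 1 := by
  ext a b
  rw [Matrix.mul_apply]
  simp only [Matrix.transpose_apply]
  rcases lt_trichotomy (a : ℕ) (b : ℕ) with h | h | h
  · have hb : (b : ℕ) ≠ 0 := by omega
    rw [Q_offdiag m a b hb h]
    have : a ≠ b := fun hc => by rw [hc] at h; omega
    rw [Matrix.one_apply_ne this]
  · have : a = b := Fin.ext h
    subst this
    rw [Q_diag m a, Matrix.one_apply_eq]
  · have ha : (a : ℕ) ≠ 0 := by omega
    have : ∑ k : Fin m, Qmat m k a * Qmat m k b = ∑ k : Fin m, Qmat m k b * Qmat m k a := by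
      exact Finset.sum_congr rfl fun k _ => mul_comm _ _
    rw [this, Q_offdiag m b a ha h]
    have : a ≠ b := fun hc => by rw [hc] at h; omega
    rw [Matrix.one_apply_ne this]

lemma QQt : Qmat m * (Qmat m)ᵀ = 1 := mul_eq_one_comm.mp (QtQ m)

end DipoleAux2

namespace DipoleAux2

open Dipole
open scoped Matrix.Norms.L2Operator

variable (m : ℕ) [NeZero m] (α β : ℝ)

/-- diagonal matrix with value `x` at index 0 and `y` elsewhere -/
def Dmx (x y : ℝ) : Matrix (Fin m) (Fin m) ℝ :=
  Matrix.diagonal (fun r : Fin m => if (r : ℕ) = 0 then x else y)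

lemma Dmx_ext {x y x' y' : ℝ} (h1 : x = x') (h2 : y = y') : Dmx m x y = Dmx m x' y' := by
  rw [h1, h2]

lemma Dmx_add (x y x' y' : ℝ) : Dmx m x y + Dmx m x' y' = Dmx m (x + x') (y + y') := by
  ext i j
  simp only [Dmx, Matrix.add_apply, Matrix.diagonal_apply]
  split_ifs <;> ring

lemma Dmx_neg (x y : ℝ) : -(Dmx m x y) = Dmx m (-x) (-y) := by
  ext i j
  simp only [Dmx, Matrix.neg_apply, Matrix.diagonal_apply]
  split_ifs <;> ring

lemma JQ : (Matrix.of fun _ _ => (1 : ℝ)) * Qmat m = Qmat m * Dmx m (m : ℝ) 0 := by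
  ext i j
  rw [Matrix.mul_apply, Dmx, Matrix.mul_diagonal]
  by_cases hj : (j : ℕ) = 0
  · have h1 : ∀ k : Fin m, (Matrix.of fun _ _ => (1 : ℝ)) i k * Qmat m k j
        = (Real.sqrt m)⁻¹ := by
      intro k
      simp [Qmat, Fin.val_eq_zero_iff.mp hj]
    rw [Finset.sum_congr rfl fun k _ => h1 k, Finset.sum_const, Finset.card_univ,
      Fintype.card_fin, nsmul_eq_mul, if_pos hj]
    have h2 : Qmat m i j = (Real.sqrt m)⁻¹ := by simp [Qmat, Fin.val_eq_zero_iff.mp hj]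
    rw [h2]
    ring
  · have h1 : ∀ k : Fin m, (Matrix.of fun _ _ => (1 : ℝ)) i k * Qmat m k j
        = (if (k : ℕ) < (j : ℕ) then (Real.sqrt ((j : ℕ) * ((j : ℕ) + 1 : ℕ)))⁻¹
          else if (k : ℕ) = (j : ℕ) then
            -((j : ℕ) : ℝ) * (Real.sqrt ((j : ℕ) * ((j : ℕ) + 1 : ℕ)))⁻¹ else 0) := by
      intro k
      simp only [Qmat, Matrix.of_apply, if_neg hj]
      split_ifs <;> ring
    rw [Finset.sum_congr rfl fun k _ => h1 k, col_sum m j hj, if_neg hj, mul_zero]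

lemma AQ (x : ℝ) : Amat m x * Qmat m = Qmat m * Dmx m 1 x := by
  have hm0 : ((m : ℕ) : ℝ) ≠ 0 := Nat.cast_ne_zero.mpr (NeZero.ne m)
  have key : x • (1 : Matrix (Fin m) (Fin m) ℝ) + ((1 - x) / m) • Dmx m (m : ℝ) 0
      = Dmx m 1 x := by
    ext i j
    simp only [Dmx, Matrix.add_apply, Matrix.smul_apply, Matrix.one_apply,
      Matrix.diagonal_apply, smul_eq_mul]
    split_ifs <;> first | ring1 | (field_simp <;> ring1)
  calc Amat m x * Qmat m
      = x • Qmat m + ((1 - x) / m) • ((Matrix.of fun _ _ => (1 : ℝ)) * Qmat m) := by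
        rw [Amat, Matrix.add_mul, Matrix.smul_mul, Matrix.smul_mul, one_mul]
    _ = Qmat m * (x • 1 + ((1 - x) / m) • Dmx m (m : ℝ) 0) := by
        rw [JQ m, Matrix.mul_add, Matrix.mul_smul, Matrix.mul_smul, mul_one]
    _ = Qmat m * Dmx m 1 x := by rw [key]

lemma BQ (x : ℝ) : Bmat m x * Qmat m = Qmat m * Dmx m 1 x := AQ m x

/-- `K_o = Pᵀ H_odd P` -/
def Ko (α β : ℝ) : Matrix (Fin m ⊕ Fin m) (Fin m ⊕ Fin m) ℝ :=
  Matrix.fromBlocks (Dmx m 1 ((α + β) / 2)) (Dmx m 0 ((α - β) / 2))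
    (Dmx m 1 ((α + β) / 2)) (Dmx m 0 ((α - β) / 2))

/-- `K_e = Pᵀ H_even P` -/
def Ke (α β : ℝ) : Matrix (Fin m ⊕ Fin m) (Fin m ⊕ Fin m) ℝ :=
  Matrix.fromBlocks (Dmx m 1 ((α + β) / 2)) (-(Dmx m 0 ((α - β) / 2)))
    (-(Dmx m 1 ((α + β) / 2))) (Dmx m 0 ((α - β) / 2))

def Fm : Matrix (Fin m ⊕ Fin m) (Fin m ⊕ Fin m) ℝ :=
  Matrix.fromBlocks (Qmat m) (Qmat m) (Qmat m) (-(Qmat m))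

lemma Pmat_eq : Pmat m = (Real.sqrt 2)⁻¹ • Fm m := rfl

lemma FtF : (Fm m)ᵀ * Fm m = (2 : ℝ) • (1 : Matrix (Fin m ⊕ Fin m) (Fin m ⊕ Fin m) ℝ) := by
  rw [Fm, Matrix.fromBlocks_transpose, Matrix.fromBlocks_multiply]
  simp only [Matrix.transpose_neg, Matrix.neg_mul, Matrix.mul_neg, neg_neg, QtQ m,
    add_neg_cancel]
  have h11 : (1 + 1 : Matrix (Fin m) (Fin m) ℝ) = (2 : ℝ) • 1 := (two_smul ℝ _).symm
  have h00 : (0 : Matrix (Fin m) (Fin m) ℝ) = (2 : ℝ) • 0 := (smul_zero _).symm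
  rw [h11, h00, ← Matrix.fromBlocks_smul, Matrix.fromBlocks_one]

lemma PtP : (Pmat m)ᵀ * Pmat m = 1 := by
  rw [Pmat_eq, Matrix.transpose_smul, Matrix.smul_mul, Matrix.mul_smul, smul_smul, FtF,
    smul_smul]
  have h2 : (Real.sqrt 2)⁻¹ * (Real.sqrt 2)⁻¹ * 2 = 1 := by
    rw [← mul_inv, Real.mul_self_sqrt (by norm_num)]
    norm_num
  rw [h2, one_smul]

lemma PPt : Pmat m * (Pmat m)ᵀ = 1 := mul_eq_one_comm.mp (PtP m)

lemma FKo (α β : ℝ) : Fm m * Ko m α β = Hodd m α β * Fm m := by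
  rw [Fm, Ko, Hodd, Matrix.fromBlocks_multiply, Matrix.fromBlocks_multiply]
  simp only [Matrix.zero_mul, add_zero, Matrix.neg_mul, Matrix.mul_neg, add_neg_cancel,
    AQ m, BQ m]
  have hTL : Qmat m * Dmx m 1 ((α + β) / 2) + Qmat m * Dmx m 1 ((α + β) / 2)
      = Qmat m * Dmx m 1 α + Qmat m * Dmx m 1 β := by
    rw [← Matrix.mul_add, ← Matrix.mul_add, Dmx_add, Dmx_add]
    exact congrArg _ (Dmx_ext m (by norm_num) (by ring))
  have hTR : Qmat m * Dmx m 0 ((α - β) / 2) + Qmat m * Dmx m 0 ((α - β) / 2)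
      = Qmat m * Dmx m 1 α + -(Qmat m * Dmx m 1 β) := by
    rw [← Matrix.mul_neg, ← Matrix.mul_add, ← Matrix.mul_add, Dmx_neg, Dmx_add, Dmx_add]
    exact congrArg _ (Dmx_ext m (by norm_num) (by ring))
  rw [hTL, hTR]

lemma FKe (α β : ℝ) : Fm m * Ke m α β = Heven m α β * Fm m := by
  rw [Fm, Ke, Heven, Matrix.fromBlocks_multiply, Matrix.fromBlocks_multiply]
  simp only [Matrix.zero_mul, add_zero, zero_add, Matrix.neg_mul, Matrix.mul_neg, neg_neg,
    add_neg_cancel, neg_add_cancel, AQ m, BQ m]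
  have hBL : Qmat m * Dmx m 1 ((α + β) / 2) + Qmat m * Dmx m 1 ((α + β) / 2)
      = Qmat m * Dmx m 1 β + Qmat m * Dmx m 1 α := by
    rw [← Matrix.mul_add, ← Matrix.mul_add, Dmx_add, Dmx_add]
    exact congrArg _ (Dmx_ext m (by norm_num) (by ring))
  have hBR : -(Qmat m * Dmx m 0 ((α - β) / 2)) + -(Qmat m * Dmx m 0 ((α - β) / 2))
      = Qmat m * Dmx m 1 β + -(Qmat m * Dmx m 1 α) := by
    rw [← Matrix.mul_neg, ← Matrix.mul_neg, Dmx_neg m 0, Dmx_neg m 1,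
      ← Matrix.mul_add, ← Matrix.mul_add, Dmx_add, Dmx_add]
    exact congrArg _ (Dmx_ext m (by norm_num) (by ring))
  rw [hBL, hBR]

lemma PtHoddP (α β : ℝ) : (Pmat m)ᵀ * Hodd m α β * Pmat m = Ko m α β := by
  have h : Hodd m α β * Pmat m = Pmat m * Ko m α β := by
    rw [Pmat_eq, Matrix.mul_smul, Matrix.smul_mul, FKo]
  rw [Matrix.mul_assoc, h, ← Matrix.mul_assoc, PtP, one_mul]

lemma PtHevenP (α β : ℝ) : (Pmat m)ᵀ * Heven m α β * Pmat m = Ke m α β := by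
  have h : Heven m α β * Pmat m = Pmat m * Ke m α β := by
    rw [Pmat_eq, Matrix.mul_smul, Matrix.smul_mul, FKe]
  rw [Matrix.mul_assoc, h, ← Matrix.mul_assoc, PtP, one_mul]

/-- the diagonal projection killing the first coordinate -/
def Zm : Matrix (Fin m ⊕ Fin m) (Fin m ⊕ Fin m) ℝ :=
  Matrix.diagonal (fun i => if i = Sum.inl (0 : Fin m) then (0 : ℝ) else 1)

lemma Zm_mul_Zm : Zm m * Zm m = Zm m := by
  ext i j
  simp only [Zm, Matrix.diagonal_mul_diagonal, Matrix.diagonal_apply, Pi.mul_apply]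
  split_ifs <;> ring

lemma Zm_transpose : (Zm m)ᵀ = Zm m := Matrix.diagonal_transpose _

lemma norm_Zm_le : ‖Zm m‖ ≤ 1 := by
  apply DipoleAux.norm_diagonal_le _ 1 zero_le_one
  intro i
  split_ifs <;> norm_num

lemma Ko_first_row (α β : ℝ) (j : Fin m ⊕ Fin m) (hj : j ≠ Sum.inl 0) :
    Ko m α β (Sum.inl 0) j = 0 := by
  rcases j with j | j
  · have hj0 : (0 : Fin m) ≠ j := fun h => hj (by rw [h])
    simp [Ko, Dmx, Matrix.diagonal_apply_ne _ hj0]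
  · by_cases h : (0 : Fin m) = j
    · subst h
      simp [Ko, Dmx]
    · simp [Ko, Dmx, Matrix.diagonal_apply_ne _ h]

lemma Ke_first_row (α β : ℝ) (j : Fin m ⊕ Fin m) (hj : j ≠ Sum.inl 0) :
    Ke m α β (Sum.inl 0) j = 0 := by
  rcases j with j | j
  · have hj0 : (0 : Fin m) ≠ j := fun h => hj (by rw [h])
    simp [Ke, Dmx, Matrix.diagonal_apply_ne _ hj0]
  · by_cases h : (0 : Fin m) = j
    · subst h
      simp [Ke, Dmx]
    · simp [Ke, Dmx, Matrix.diagonal_apply_ne _ h]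

def Good (X : Matrix (Fin m ⊕ Fin m) (Fin m ⊕ Fin m) ℝ) : Prop :=
  ∀ j, j ≠ Sum.inl 0 → X (Sum.inl 0) j = 0

lemma good_conj {X : Matrix (Fin m ⊕ Fin m) (Fin m ⊕ Fin m) ℝ}
    (hX : Good m X) : Zm m * X * Zm m = X * Zm m := by
  ext i j
  rw [Zm, Matrix.mul_diagonal, Matrix.mul_diagonal, Matrix.diagonal_mul]
  by_cases hi : i = Sum.inl (0 : Fin m)
  · subst hi
    rw [if_pos rfl, zero_mul]
    by_cases hj : j = Sum.inl (0 : Fin m)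
    · simp [hj]
    · simp [hX j hj]
  · rw [if_neg hi, one_mul]

lemma good_Ko (α β : ℝ) : Good m (Ko m α β) := Ko_first_row m α β

lemma good_Ke (α β : ℝ) : Good m (Ke m α β) := Ke_first_row m α β

lemma good_one : Good m 1 := by
  intro j hj
  exact Matrix.one_apply_ne fun h => hj h.symm

lemma good_mul {X Y : Matrix (Fin m ⊕ Fin m) (Fin m ⊕ Fin m) ℝ}
    (hX : Good m X) (hY : Good m Y) : Good m (X * Y) := by
  intro j hj
  rw [Matrix.mul_apply]
  refine Finset.sum_eq_zero fun k _ => ?_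
  by_cases hk : k = Sum.inl (0 : Fin m)
  · subst hk
    rw [hY j hj, mul_zero]
  · rw [hX k hk, zero_mul]

lemma good_affine (c : ℝ) {K : Matrix (Fin m ⊕ Fin m) (Fin m ⊕ Fin m) ℝ} (hK : Good m K) :
    Good m (1 + c • K) := by
  intro j hj
  rw [Matrix.add_apply, Matrix.smul_apply, hK j hj, Matrix.one_apply_ne fun h => hj h.symm]
  simp

end DipoleAux2

namespace DipoleAux2

open Dipole
open scoped Matrix.Norms.L2Operator

variable (m : ℕ) [NeZero m] (α β : ℝ)

lemma KoKe_sum : Ko m α β + Ke m α β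
    = Matrix.diagonal (Sum.elim (fun r : Fin m => if (r : ℕ) = 0 then 2 else α + β)
        (fun r : Fin m => if (r : ℕ) = 0 then 0 else α - β)) := by
  rw [Ko, Ke, Matrix.fromBlocks_add, add_neg_cancel, add_neg_cancel, Dmx_add, Dmx_add]
  rw [Dmx, Dmx, Matrix.fromBlocks_diagonal]
  have hfun : (Sum.elim (fun r : Fin m => if (r : ℕ) = 0 then (1 : ℝ) + 1 else (α + β) / 2 + (α + β) / 2)
      (fun r : Fin m => if (r : ℕ) = 0 then (0 : ℝ) + 0 else (α - β) / 2 + (α - β) / 2))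
      = (Sum.elim (fun r : Fin m => if (r : ℕ) = 0 then (2 : ℝ) else α + β)
        (fun r : Fin m => if (r : ℕ) = 0 then (0 : ℝ) else α - β)) := by
    funext i
    rcases i with r | r <;> simp only [Sum.elim_inl, Sum.elim_inr] <;> split_ifs <;> ring
  rw [hfun]

lemma WZ_eq (s : ℝ) : ((1 : Matrix (Fin m ⊕ Fin m) (Fin m ⊕ Fin m) ℝ)
      + s • (Ko m α β + Ke m α β)) * Zm m
    = Matrix.diagonal (Sum.elim
        (fun r : Fin m => if (r : ℕ) = 0 then 0 else 1 + 2 * s * ((α + β) / 2))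
        (fun r : Fin m => if (r : ℕ) = 0 then 1 else 1 + 2 * s * ((α - β) / 2))) := by
  rw [KoKe_sum, Zm]
  ext i j
  rw [Matrix.mul_diagonal, Matrix.add_apply, Matrix.smul_apply, Matrix.diagonal_apply,
    Matrix.diagonal_apply, Matrix.one_apply]
  by_cases hij : i = j
  · subst hij
    rcases i with r | r
    · by_cases hr : (r : ℕ) = 0
      · have hr' : r = (0 : Fin m) := Fin.ext (by simpa using hr)
        subst hr'
        simp
      · have h1 : Sum.inl r ≠ (Sum.inl (0 : Fin m) : Fin m ⊕ Fin m) := by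
          simp only [ne_eq, Sum.inl.injEq]
          intro h; exact hr (by rw [h]; simp)
        simp [Fin.val_eq_zero_iff.not.mp hr, h1]
        try ring
    · have h1 : Sum.inr r ≠ (Sum.inl (0 : Fin m) : Fin m ⊕ Fin m) := by simp
      by_cases hr : (r : ℕ) = 0
      · simp [Fin.val_eq_zero_iff.mp hr, h1]
      · simp [Fin.val_eq_zero_iff.not.mp hr, h1]
        try ring
  · simp [hij]

lemma norm_WZ_le (s : ℝ) (hs0 : 0 ≤ s) (hs1 : s ≤ 1)
    (hg1 : -1 ≤ (α + β) / 2) (hgr : (α + β) / 2 ≤ rho α β)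
    (hd1 : -1 ≤ (α - β) / 2) (hdr : (α - β) / 2 ≤ rho α β) (hr0 : 0 ≤ rho α β) :
    ‖((1 : Matrix (Fin m ⊕ Fin m) (Fin m ⊕ Fin m) ℝ)
      + s • (Ko m α β + Ke m α β)) * Zm m‖ ≤ 1 + 2 * s * rho α β := by
  rw [WZ_eq]
  apply DipoleAux.norm_diagonal_le _ _ (by nlinarith)
  intro i
  rcases i with r | r <;> simp only [Sum.elim_inl, Sum.elim_inr] <;> split_ifs <;>
    refine abs_le.mpr ⟨by nlinarith, by nlinarith⟩

lemma pair_expand (s t u : ℝ) (h1 : t = s - u) (h2 : u = s * t)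
    (X Y : Matrix (Fin m ⊕ Fin m) (Fin m ⊕ Fin m) ℝ) :
    ((1 : Matrix (Fin m ⊕ Fin m) (Fin m ⊕ Fin m) ℝ) + t • X) * (1 + s • Y)
      = 1 + s • (X + Y) + u • (X * Y - X) := by
  subst h1
  have h3 : (s - u) * s = u := by nlinarith [h2]
  have h4 : ((s - u) • X) * (s • Y) = u • (X * Y) := by
    rw [Matrix.smul_mul, Matrix.mul_smul, smul_smul, h3]
  rw [Matrix.mul_add, Matrix.add_mul, Matrix.add_mul, one_mul, mul_one, h4]
  rw [sub_smul, smul_add, smul_sub]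
  rw [one_mul]
  abel

lemma pair_norm (s t : ℝ) (hs0 : 0 ≤ s) (hs1 : s ≤ 1) (ht0 : 0 ≤ t) (hts : t = s - s * t)
    (hg1 : -1 ≤ (α + β) / 2) (hgr : (α + β) / 2 ≤ rho α β)
    (hd1 : -1 ≤ (α - β) / 2) (hdr : (α - β) / 2 ≤ rho α β) (hr0 : 0 ≤ rho α β) :
    ‖((1 : Matrix (Fin m ⊕ Fin m) (Fin m ⊕ Fin m) ℝ) + t • Ko m α β)
        * (1 + s • Ke m α β) * Zm m‖
      ≤ (1 + 2 * s * rho α β)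
        * (1 + ‖Ko m α β * Ke m α β - Ko m α β‖ * (s * t)) := by
  rw [pair_expand m s t (s * t) hts rfl, Matrix.add_mul, Matrix.smul_mul]
  set c2 := ‖Ko m α β * Ke m α β - Ko m α β‖ with hc2
  have hc2n : 0 ≤ c2 := norm_nonneg _
  have h1 : ‖((1 : Matrix (Fin m ⊕ Fin m) (Fin m ⊕ Fin m) ℝ)
      + s • (Ko m α β + Ke m α β)) * Zm m
      + (s * t) • ((Ko m α β * Ke m α β - Ko m α β) * Zm m)‖
      ≤ (1 + 2 * s * rho α β) + (s * t) * c2 := by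
    calc ‖_ + _‖ ≤ ‖((1 : Matrix (Fin m ⊕ Fin m) (Fin m ⊕ Fin m) ℝ)
          + s • (Ko m α β + Ke m α β)) * Zm m‖
          + ‖(s * t) • ((Ko m α β * Ke m α β - Ko m α β) * Zm m)‖ := norm_add_le _ _
      _ ≤ (1 + 2 * s * rho α β) + (s * t) * c2 := by
          apply add_le_add
          · exact norm_WZ_le m α β s hs0 hs1 hg1 hgr hd1 hdr hr0
          · rw [norm_smul, Real.norm_eq_abs, abs_of_nonneg (by positivity)]
            apply mul_le_mul_of_nonneg_left _ (by positivity)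
            calc ‖(Ko m α β * Ke m α β - Ko m α β) * Zm m‖
                ≤ ‖Ko m α β * Ke m α β - Ko m α β‖ * ‖Zm m‖ := norm_mul_le _ _
              _ ≤ c2 := by
                  rw [← hc2]
                  calc c2 * ‖Zm m‖ ≤ c2 * 1 :=
                        mul_le_mul_of_nonneg_left (norm_Zm_le m) hc2n
                    _ = c2 := mul_one _
  refine h1.trans ?_
  nlinarith [mul_nonneg (mul_nonneg hs0 ht0) hc2n, mul_nonneg hs0 hr0]

end DipoleAux2

namespace DipoleAux2

open Dipole
open scoped Matrix.Norms.L2Operator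

variable (m : ℕ) [NeZero m] (α β : ℝ)

/-- the conjugated product `Pᵀ Π P` -/
def Gm (i n : ℕ) : Matrix (Fin m ⊕ Fin m) (Fin m ⊕ Fin m) ℝ :=
  (Pmat m)ᵀ * Pimat m α β i n * Pmat m

lemma Pimat_succ (i k : ℕ) : Pimat m α β i (k + 1)
    = if k + 1 < i then 1 else
      ((1 : Matrix (Fin m ⊕ Fin m) (Fin m ⊕ Fin m) ℝ)
        + ((k : ℝ) + 1)⁻¹ • Hn m α β (k + 2)) * Pimat m α β i k := rfl

lemma conj_mul (X Y : Matrix (Fin m ⊕ Fin m) (Fin m ⊕ Fin m) ℝ) :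
    (Pmat m)ᵀ * (X * Y) * Pmat m
      = ((Pmat m)ᵀ * X * Pmat m) * ((Pmat m)ᵀ * Y * Pmat m) := by
  have h : ((Pmat m)ᵀ * X * Pmat m) * ((Pmat m)ᵀ * Y * Pmat m)
      = (Pmat m)ᵀ * (X * Y) * Pmat m := by
    simp only [Matrix.mul_assoc]
    rw [← Matrix.mul_assoc (Pmat m) (Pmat m)ᵀ, PPt, one_mul]
  exact h.symm

lemma conj_affine (c : ℝ) (H : Matrix (Fin m ⊕ Fin m) (Fin m ⊕ Fin m) ℝ) :
    (Pmat m)ᵀ * ((1 : Matrix (Fin m ⊕ Fin m) (Fin m ⊕ Fin m) ℝ) + c • H) * Pmat m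
      = 1 + c • ((Pmat m)ᵀ * H * Pmat m) := by
  rw [Matrix.mul_add, mul_one, Matrix.mul_smul, Matrix.add_mul, PtP, Matrix.smul_mul]

lemma PtHnP (n : ℕ) : (Pmat m)ᵀ * Hn m α β n * Pmat m
    = if Odd n then Ko m α β else Ke m α β := by
  rw [Hn]
  split_ifs with h
  · exact PtHoddP m α β
  · exact PtHevenP m α β

lemma Gm_zero (i : ℕ) : Gm m α β i 0 = 1 := by
  have h0 : Pimat m α β i 0 = 1 := rfl
  rw [Gm, h0, mul_one, PtP]

lemma Gm_one (i k : ℕ) (h : k + 1 < i) : Gm m α β i (k + 1) = 1 := by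
  rw [Gm, Pimat_succ, if_pos h, mul_one, PtP]

lemma Gm_succ (i k : ℕ) (h : ¬ (k + 1 < i)) :
    Gm m α β i (k + 1)
      = ((1 : Matrix (Fin m ⊕ Fin m) (Fin m ⊕ Fin m) ℝ)
          + ((k : ℝ) + 1)⁻¹ • (if Odd (k + 2) then Ko m α β else Ke m α β))
        * Gm m α β i k := by
  simp only [Gm]
  rw [Pimat_succ, if_neg h, conj_mul, conj_affine, PtHnP]

lemma good_Gm (i : ℕ) : ∀ n, Good m (Gm m α β i n) := by
  intro n
  induction n with
  | zero => rw [Gm_zero]; exact good_one m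
  | succ k ih =>
      by_cases h : k + 1 < i
      · rw [Gm_one m α β i k h]; exact good_one m
      · rw [Gm_succ m α β i k h]
        refine good_mul m ?_ ih
        apply good_affine
        split_ifs
        · exact good_Ko m α β
        · exact good_Ke m α β

lemma inv_le_one' (x : ℕ) : ((x : ℝ) + 1)⁻¹ ≤ 1 := by
  rw [inv_le_one_iff₀]
  right
  have : (0:ℝ) ≤ (x:ℝ) := Nat.cast_nonneg x
  linarith

lemma norm_Gm_le
    (hg1 : -1 ≤ (α + β) / 2) (hgr : (α + β) / 2 ≤ rho α β)
    (hd1 : -1 ≤ (α - β) / 2) (hdr : (α - β) / 2 ≤ rho α β) (hr0 : 0 ≤ rho α β)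
    (l : ℕ) (hl : 1 ≤ l) (i : ℕ) (hi : i = 2 * l - 1 ∨ i = 2 * l) :
    ∀ k, l ≤ k → ‖Gm m α β i (2 * k) * Zm m‖
      ≤ (1 + ‖Ko m α β‖) * (1 + ‖Ke m α β‖)
        * ∏ j ∈ Finset.Ico l k,
          ((1 + 2 * rho α β * (2 * (j : ℝ) + 1)⁻¹)
            * (1 + ‖Ko m α β * Ke m α β - Ko m α β‖
                * ((2 * (j : ℝ) + 1)⁻¹ * (2 * (j : ℝ) + 2)⁻¹))) := by
  have hKo : (0:ℝ) ≤ ‖Ko m α β‖ := norm_nonneg _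
  have hKe : (0:ℝ) ≤ ‖Ke m α β‖ := norm_nonneg _
  have hc2 : (0:ℝ) ≤ ‖Ko m α β * Ke m α β - Ko m α β‖ := norm_nonneg _
  intro k hk
  induction k, hk using Nat.le_induction with
  | base =>
      rw [Finset.Ico_self, Finset.prod_empty, mul_one]
      have e1 : 2 * l = (2 * l - 1) + 1 := by omega
      have hodd : Odd ((2 * l - 1) + 2) := by rw [Nat.odd_iff]; omega
      have e2 : 2 * l - 1 = (2 * l - 2) + 1 := by omega
      rcases hi with hi | hi
      · -- i = 2l - 1 : two factors
        have heven : ¬ Odd ((2 * l - 2) + 2) := by rw [Nat.odd_iff]; omega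
        have hG2 : Gm m α β i (2 * l - 2) = 1 := by
          rcases Nat.lt_or_ge l 2 with h2 | h2
          · have h0 : 2 * l - 2 = 0 := by omega
            rw [h0, Gm_zero]
          · have e3 : 2 * l - 2 = (2 * l - 3) + 1 := by omega
            rw [e3]
            exact Gm_one m α β i _ (by omega)
        have hG1 : Gm m α β i (2 * l - 1)
            = ((1 : Matrix (Fin m ⊕ Fin m) (Fin m ⊕ Fin m) ℝ)
                + (((2 * l - 2 : ℕ) : ℝ) + 1)⁻¹ • Ke m α β) := by
          conv_lhs => rw [e2]
          rw [Gm_succ m α β i _ (by omega), if_neg heven, hG2, mul_one]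
        have hG : Gm m α β i (2 * l)
            = ((1 : Matrix (Fin m ⊕ Fin m) (Fin m ⊕ Fin m) ℝ)
                + (((2 * l - 1 : ℕ) : ℝ) + 1)⁻¹ • Ko m α β)
              * ((1 : Matrix (Fin m ⊕ Fin m) (Fin m ⊕ Fin m) ℝ)
                + (((2 * l - 2 : ℕ) : ℝ) + 1)⁻¹ • Ke m α β) := by
          conv_lhs => rw [e1]
          rw [Gm_succ m α β i _ (by omega), if_pos hodd, hG1]
        rw [hG, Matrix.mul_assoc]
        have b1 := DipoleAux.norm_affine_le (((2 * l - 1 : ℕ) : ℝ) + 1)⁻¹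
          (by positivity) (inv_le_one' _) (Ko m α β)
        have b2 := DipoleAux.norm_affine_le (((2 * l - 2 : ℕ) : ℝ) + 1)⁻¹
          (by positivity) (inv_le_one' _) (Ke m α β)
        have bz := norm_Zm_le m
        calc ‖((1 : Matrix (Fin m ⊕ Fin m) (Fin m ⊕ Fin m) ℝ)
              + (((2 * l - 1 : ℕ) : ℝ) + 1)⁻¹ • Ko m α β)
              * (((1 : Matrix (Fin m ⊕ Fin m) (Fin m ⊕ Fin m) ℝ)
                + (((2 * l - 2 : ℕ) : ℝ) + 1)⁻¹ • Ke m α β) * Zm m)‖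
            ≤ ‖(1 : Matrix (Fin m ⊕ Fin m) (Fin m ⊕ Fin m) ℝ)
              + (((2 * l - 1 : ℕ) : ℝ) + 1)⁻¹ • Ko m α β‖
              * (‖(1 : Matrix (Fin m ⊕ Fin m) (Fin m ⊕ Fin m) ℝ)
                + (((2 * l - 2 : ℕ) : ℝ) + 1)⁻¹ • Ke m α β‖ * ‖Zm m‖) := by
              refine (norm_mul_le _ _).trans ?_
              exact mul_le_mul_of_nonneg_left (norm_mul_le _ _) (norm_nonneg _)
          _ ≤ (1 + ‖Ko m α β‖) * ((1 + ‖Ke m α β‖) * 1) := by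
              refine mul_le_mul b1 ?_ (mul_nonneg (norm_nonneg _) (norm_nonneg _)) (by linarith)
              exact mul_le_mul b2 bz (norm_nonneg _) (by linarith)
          _ = (1 + ‖Ko m α β‖) * (1 + ‖Ke m α β‖) := by ring
      · -- i = 2l : one factor
        have hG1 : Gm m α β i (2 * l - 1) = 1 := by
          rw [e2]
          exact Gm_one m α β i _ (by omega)
        have hG : Gm m α β i (2 * l)
            = ((1 : Matrix (Fin m ⊕ Fin m) (Fin m ⊕ Fin m) ℝ)
                + (((2 * l - 1 : ℕ) : ℝ) + 1)⁻¹ • Ko m α β) := by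
          conv_lhs => rw [e1]
          rw [Gm_succ m α β i _ (by omega), if_pos hodd, hG1, mul_one]
        rw [hG]
        have b1 := DipoleAux.norm_affine_le (((2 * l - 1 : ℕ) : ℝ) + 1)⁻¹
          (by positivity) (inv_le_one' _) (Ko m α β)
        have bz := norm_Zm_le m
        calc ‖((1 : Matrix (Fin m ⊕ Fin m) (Fin m ⊕ Fin m) ℝ)
              + (((2 * l - 1 : ℕ) : ℝ) + 1)⁻¹ • Ko m α β) * Zm m‖
            ≤ ‖(1 : Matrix (Fin m ⊕ Fin m) (Fin m ⊕ Fin m) ℝ)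
              + (((2 * l - 1 : ℕ) : ℝ) + 1)⁻¹ • Ko m α β‖ * ‖Zm m‖ := norm_mul_le _ _
          _ ≤ (1 + ‖Ko m α β‖) * 1 := mul_le_mul b1 bz (norm_nonneg _) (by linarith)
          _ ≤ (1 + ‖Ko m α β‖) * (1 + ‖Ke m α β‖) := by nlinarith
  | succ k hk ih =>
      have hi' : i ≤ 2 * l := by rcases hi with h | h <;> omega
      have e : 2 * (k + 1) = (2 * k + 1) + 1 := by omega
      have hodd : Odd ((2 * k + 1) + 2) := by rw [Nat.odd_iff]; omega
      have heven : ¬ Odd ((2 * k) + 2) := by rw [Nat.odd_iff]; omega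
      have hca : (((2 * k + 1 : ℕ) : ℝ) + 1) = 2 * (k : ℝ) + 2 := by push_cast; ring
      have hcb : (((2 * k : ℕ) : ℝ) + 1) = 2 * (k : ℝ) + 1 := by push_cast; ring
      have hstep : Gm m α β i (2 * (k + 1))
          = ((1 : Matrix (Fin m ⊕ Fin m) (Fin m ⊕ Fin m) ℝ)
              + (2 * (k : ℝ) + 2)⁻¹ • Ko m α β)
            * (((1 : Matrix (Fin m ⊕ Fin m) (Fin m ⊕ Fin m) ℝ)
              + (2 * (k : ℝ) + 1)⁻¹ • Ke m α β) * Gm m α β i (2 * k)) := by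
        rw [e, Gm_succ m α β i _ (by omega), if_pos hodd,
          Gm_succ m α β i _ (by omega), if_neg heven, hca, hcb]
      have hgood : Zm m * Gm m α β i (2 * k) * Zm m = Gm m α β i (2 * k) * Zm m :=
        good_conj m (good_Gm m α β i (2 * k))
      have hzg : Gm m α β i (2 * k) * Zm m = Zm m * (Gm m α β i (2 * k) * Zm m) := by
        rw [← Matrix.mul_assoc, hgood]
      have heq : Gm m α β i (2 * (k + 1)) * Zm m
          = (((1 : Matrix (Fin m ⊕ Fin m) (Fin m ⊕ Fin m) ℝ)
              + (2 * (k : ℝ) + 2)⁻¹ • Ko m α β)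
            * ((1 : Matrix (Fin m ⊕ Fin m) (Fin m ⊕ Fin m) ℝ)
              + (2 * (k : ℝ) + 1)⁻¹ • Ke m α β) * Zm m)
            * (Gm m α β i (2 * k) * Zm m) := by
        rw [hstep]
        simp only [Matrix.mul_assoc]
        conv_lhs => rw [hzg]
      -- pair bound
      have hk0 : (0:ℝ) ≤ (k:ℝ) := Nat.cast_nonneg k
      have hs0 : (0:ℝ) ≤ (2 * (k : ℝ) + 1)⁻¹ := by positivity
      have hs1 : (2 * (k : ℝ) + 1)⁻¹ ≤ 1 := by
        rw [inv_le_one_iff₀]; right; linarith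
      have ht0 : (0:ℝ) ≤ (2 * (k : ℝ) + 2)⁻¹ := by positivity
      have hts : (2 * (k : ℝ) + 2)⁻¹
          = (2 * (k : ℝ) + 1)⁻¹ - (2 * (k : ℝ) + 1)⁻¹ * (2 * (k : ℝ) + 2)⁻¹ := by
        have h1 : (2 * (k : ℝ) + 1) ≠ 0 := by positivity
        have h2 : (2 * (k : ℝ) + 2) ≠ 0 := by positivity
        field_simp
        ring
      have hpair := pair_norm m α β (2 * (k : ℝ) + 1)⁻¹ (2 * (k : ℝ) + 2)⁻¹
        hs0 hs1 ht0 hts hg1 hgr hd1 hdr hr0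
      have hpairpos : (0:ℝ) ≤ (1 + 2 * (2 * (k : ℝ) + 1)⁻¹ * rho α β)
          * (1 + ‖Ko m α β * Ke m α β - Ko m α β‖
              * ((2 * (k : ℝ) + 1)⁻¹ * (2 * (k : ℝ) + 2)⁻¹)) := by
        have := mul_nonneg hs0 hr0
        have := mul_nonneg hc2 (mul_nonneg hs0 ht0)
        nlinarith
      rw [heq]
      refine (norm_mul_le _ _).trans ?_
      refine (mul_le_mul hpair ih (norm_nonneg _) hpairpos).trans_eq ?_
      rw [Finset.prod_Ico_succ_top hk]
      ring

end DipoleAux2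

namespace DipoleAux2

open Dipole
open scoped Matrix.Norms.L2Operator

lemma lam_factor_ge_one (i : ℕ) (hi : 1 ≤ i) (c : ℝ) (hc : 0 ≤ c) :
    1 ≤ (2 * (i : ℝ) - 1 + 2 * c) / (2 * (i : ℝ) - 1) := by
  have h1 : (1:ℝ) ≤ (i:ℝ) := by exact_mod_cast hi
  have h2 : (0:ℝ) < 2 * (i : ℝ) - 1 := by linarith
  rw [le_div_iff₀ h2]
  linarith

lemma lam_ge_one (l k : ℕ) (hl : 1 ≤ l) (c : ℝ) (hc : 0 ≤ c) : 1 ≤ lam l k c := by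
  rw [lam]
  have h := Finset.prod_le_prod (s := Finset.Icc l k)
    (f := fun _ : ℕ => (1:ℝ)) (g := fun i : ℕ => (2 * (i : ℝ) - 1 + 2 * c) / (2 * (i : ℝ) - 1))
    (fun i _ => zero_le_one)
    (fun i hi => lam_factor_ge_one i (by
      have := (Finset.mem_Icc.mp hi).1; omega) c hc)
  simpa using h

lemma prodA_le_lam (l : ℕ) (hl : 1 ≤ l) (c : ℝ) (hc : 0 ≤ c) :
    ∀ k, l ≤ k → ∏ j ∈ Finset.Ico l k, (1 + 2 * c * (2 * (j : ℝ) + 1)⁻¹) ≤ lam l k c := by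
  intro k hk
  induction k, hk using Nat.le_induction with
  | base =>
      rw [Finset.Ico_self, Finset.prod_empty, lam, Finset.Icc_self, Finset.prod_singleton]
      exact lam_factor_ge_one l hl c hc
  | succ k hk ih =>
      rw [Finset.prod_Ico_succ_top hk, lam, Finset.prod_Icc_succ_top (by omega : l ≤ k + 1)]
      rw [← lam]
      have hfac : 1 + 2 * c * (2 * (k : ℝ) + 1)⁻¹
          = (2 * ((k:ℝ) + 1) - 1 + 2 * c) / (2 * ((k:ℝ) + 1) - 1) := by
        have h1 : (2 * (k:ℝ) + 1) ≠ 0 := by positivity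
        rw [show (2 * ((k:ℝ) + 1) - 1 : ℝ) = 2 * (k:ℝ) + 1 by ring]
        field_simp
      have hterm : ((((k + 1 : ℕ)) : ℝ)) = (k : ℝ) + 1 := by push_cast; ring
      rw [hterm, ← hfac]
      have hpos : (0:ℝ) ≤ 1 + 2 * c * (2 * (k : ℝ) + 1)⁻¹ := by positivity
      have hlam : (0:ℝ) ≤ lam l k c := le_trans zero_le_one (lam_ge_one l k hl c hc)
      exact mul_le_mul ih le_rfl hpos hlam

lemma sum_inv_le (l : ℕ) : ∀ k, l ≤ k →
    ∑ j ∈ Finset.Ico l k, ((2 * (j : ℝ) + 1)⁻¹ * (2 * (j : ℝ) + 2)⁻¹)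
      ≤ ((l : ℝ) + 1)⁻¹ - ((k : ℝ) + 1)⁻¹ := by
  intro k hk
  induction k, hk using Nat.le_induction with
  | base => simp
  | succ k hk ih =>
      rw [Finset.sum_Ico_succ_top hk]
      have hc : (((k + 1 : ℕ)) : ℝ) + 1 = (k : ℝ) + 2 := by push_cast; ring
      rw [hc]
      have e1 : ((k:ℝ)+1)⁻¹ - ((k:ℝ)+2)⁻¹ = (((k:ℝ)+1) * ((k:ℝ)+2))⁻¹ := by
        have h1 : ((k:ℝ)+1) ≠ 0 := by positivity
        have h2 : ((k:ℝ)+2) ≠ 0 := by positivity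
        field_simp
        ring
      have e2 : (2 * (k : ℝ) + 1)⁻¹ * (2 * (k : ℝ) + 2)⁻¹
          = ((2 * (k : ℝ) + 1) * (2 * (k : ℝ) + 2))⁻¹ := (mul_inv _ _).symm
      have h3 : (2 * (k : ℝ) + 1)⁻¹ * (2 * (k : ℝ) + 2)⁻¹
          ≤ ((k:ℝ)+1)⁻¹ - ((k:ℝ)+2)⁻¹ := by
        rw [e1, e2]
        have hk0 : (0:ℝ) ≤ (k:ℝ) := Nat.cast_nonneg k
        apply inv_anti₀ (by positivity)
        nlinarith
      linarith

lemma prodB_le_exp (c2 : ℝ) (hc2 : 0 ≤ c2) (l k : ℕ) (hk : l ≤ k) (hl : 1 ≤ l) :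
    ∏ j ∈ Finset.Ico l k, (1 + c2 * ((2 * (j : ℝ) + 1)⁻¹ * (2 * (j : ℝ) + 2)⁻¹))
      ≤ Real.exp c2 := by
  have h1 : ∏ j ∈ Finset.Ico l k, (1 + c2 * ((2 * (j : ℝ) + 1)⁻¹ * (2 * (j : ℝ) + 2)⁻¹))
      ≤ ∏ j ∈ Finset.Ico l k,
          Real.exp (c2 * ((2 * (j : ℝ) + 1)⁻¹ * (2 * (j : ℝ) + 2)⁻¹)) := by
    apply Finset.prod_le_prod
    · intro j _; positivity
    · intro j _
      have := Real.add_one_le_exp (c2 * ((2 * (j : ℝ) + 1)⁻¹ * (2 * (j : ℝ) + 2)⁻¹))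
      linarith
  rw [← Real.exp_sum] at h1
  refine h1.trans (Real.exp_le_exp.mpr ?_)
  rw [← Finset.mul_sum]
  have hs := sum_inv_le l k hk
  have hl1 : ((l:ℝ)+1)⁻¹ ≤ 1 := by
    rw [inv_le_one_iff₀]; right
    have : (0:ℝ) ≤ (l:ℝ) := Nat.cast_nonneg l
    linarith
  have hk1 : (0:ℝ) ≤ ((k:ℝ)+1)⁻¹ := by positivity
  calc c2 * ∑ j ∈ Finset.Ico l k, ((2 * (j : ℝ) + 1)⁻¹ * (2 * (j : ℝ) + 2)⁻¹)
      ≤ c2 * 1 := mul_le_mul_of_nonneg_left (by linarith) hc2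
    _ = c2 := mul_one _

lemma trace_nonneg' {ι : Type*} [Fintype ι] [DecidableEq ι]
    (E : Matrix ι ι ℝ) (hE : E.PosSemidef) : 0 ≤ Matrix.trace E := by
  rw [Matrix.trace]
  apply Finset.sum_nonneg
  intro j _
  have h := hE.dotProduct_mulVec_nonneg (Pi.single j 1)
  simpa [dotProduct, Matrix.mulVec, Pi.single_apply] using h

end DipoleAux2

open scoped Matrix.Norms.L2Operator

open Dipole in
/-- **Lemma 3.4' (trace inequality for the reduced products).**
There is a constant `C > 0` such that for every symmetric positive-semidefinite
`2m × 2m` matrix `E` with vanishing first row and column, all `k ≥ l ≥ 1` and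
`i ∈ {2l−1, 2l}`, `trace((Pᵀ Π_{2k,i} P) E (Pᵀ Π_{2k,i} P)ᵀ) ≤ C λ_{k,l}(ρ)² trace(E)`. -/
theorem Dipole.Pimat_trace_bound
    (m : ℕ) (hm : 2 ≤ m) [NeZero m] (α β : ℝ)
    (hα : α ∈ Set.Icc (-(1 / ((m : ℝ) - 1))) 1)
    (hβ : β ∈ Set.Icc (-(1 / ((m : ℝ) - 1))) 1) :
    ∃ C : ℝ, 0 < C ∧
      ∀ E : Matrix (Fin m ⊕ Fin m) (Fin m ⊕ Fin m) ℝ, E.IsSymm → E.PosSemidef →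
        (∀ j, E (Sum.inl 0) j = 0) → (∀ j, E j (Sum.inl 0) = 0) →
        ∀ k l : ℕ, 1 ≤ l → l ≤ k → ∀ i : ℕ, i = 2 * l - 1 ∨ i = 2 * l →
          Matrix.trace
              (((Pmat m)ᵀ * Pimat m α β i (2 * k) * Pmat m) * E *
                ((Pmat m)ᵀ * Pimat m α β i (2 * k) * Pmat m)ᵀ) ≤
            C * lam l k (rho α β) ^ 2 * Matrix.trace E := by
  have hm2 : (2:ℝ) ≤ (m:ℝ) := by exact_mod_cast hm
  have hiv : 1 / ((m:ℝ) - 1) ≤ 1 := by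
    rw [div_le_one (by linarith)]
    linarith
  have hα1 : -1 ≤ α := le_trans (by linarith) hα.1
  have hβ1 : -1 ≤ β := le_trans (by linarith) hβ.1
  have hα2 : α ≤ 1 := hα.2
  have hβ2 : β ≤ 1 := hβ.2
  have hg1 : -1 ≤ (α + β) / 2 := by linarith
  have hd1 : -1 ≤ (α - β) / 2 := by linarith
  have hr0 : 0 ≤ rho α β := le_max_left _ _
  have hgr : (α + β) / 2 ≤ rho α β := le_trans (le_max_left _ _) (le_max_right _ _)
  have hdr : (α - β) / 2 ≤ rho α β := le_trans (le_max_right _ _) (le_max_right _ _)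
  have hKo : (0:ℝ) ≤ ‖DipoleAux2.Ko m α β‖ := norm_nonneg _
  have hKe : (0:ℝ) ≤ ‖DipoleAux2.Ke m α β‖ := norm_nonneg _
  have hc2n : (0:ℝ) ≤ ‖DipoleAux2.Ko m α β * DipoleAux2.Ke m α β - DipoleAux2.Ko m α β‖ :=
    norm_nonneg _
  refine ⟨((1 + ‖DipoleAux2.Ko m α β‖) * (1 + ‖DipoleAux2.Ke m α β‖)
      * Real.exp ‖DipoleAux2.Ko m α β * DipoleAux2.Ke m α β - DipoleAux2.Ko m α β‖) ^ 2,
    ?_, ?_⟩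
  · apply pow_pos
    apply mul_pos (mul_pos (by linarith) (by linarith)) (Real.exp_pos _)
  · intro E hsymm hpsd h0r h0c k l hl hk i hi
    have hEZ : E = DipoleAux2.Zm m * E * DipoleAux2.Zm m := by
      ext a b
      rw [DipoleAux2.Zm, Matrix.mul_diagonal, Matrix.diagonal_mul]
      by_cases ha : a = Sum.inl (0 : Fin m)
      · subst ha
        rw [h0r b]
        simp
      · rw [if_neg ha, one_mul]
        by_cases hb : b = Sum.inl (0 : Fin m)
        · subst hb
          rw [h0c a]
          simp
        · rw [if_neg hb, mul_one]
    have hkey : ((Pmat m)ᵀ * Pimat m α β i (2 * k) * Pmat m) * E *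
          ((Pmat m)ᵀ * Pimat m α β i (2 * k) * Pmat m)ᵀ
        = (((Pmat m)ᵀ * Pimat m α β i (2 * k) * Pmat m) * DipoleAux2.Zm m) * E *
          (((Pmat m)ᵀ * Pimat m α β i (2 * k) * Pmat m) * DipoleAux2.Zm m)ᵀ := by
      conv_lhs => rw [hEZ]
      rw [Matrix.transpose_mul ((Pmat m)ᵀ * Pimat m α β i (2 * k) * Pmat m)
        (DipoleAux2.Zm m), DipoleAux2.Zm_transpose]
      noncomm_ring
    rw [hkey]
    have htr := DipoleAux.trace_conj_le
      (((Pmat m)ᵀ * Pimat m α β i (2 * k) * Pmat m) * DipoleAux2.Zm m) E hpsd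
    refine htr.trans ?_
    have hGm : (Pmat m)ᵀ * Pimat m α β i (2 * k) * Pmat m = DipoleAux2.Gm m α β i (2 * k) :=
      rfl
    have hnorm := DipoleAux2.norm_Gm_le m α β hg1 hgr hd1 hdr hr0 l hl i hi k hk
    have hprod : ∏ j ∈ Finset.Ico l k,
          ((1 + 2 * rho α β * (2 * (j : ℝ) + 1)⁻¹)
            * (1 + ‖DipoleAux2.Ko m α β * DipoleAux2.Ke m α β - DipoleAux2.Ko m α β‖
                * ((2 * (j : ℝ) + 1)⁻¹ * (2 * (j : ℝ) + 2)⁻¹)))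
        = (∏ j ∈ Finset.Ico l k, (1 + 2 * rho α β * (2 * (j : ℝ) + 1)⁻¹))
          * (∏ j ∈ Finset.Ico l k,
              (1 + ‖DipoleAux2.Ko m α β * DipoleAux2.Ke m α β - DipoleAux2.Ko m α β‖
                * ((2 * (j : ℝ) + 1)⁻¹ * (2 * (j : ℝ) + 2)⁻¹))) :=
      Finset.prod_mul_distrib
    have hA := DipoleAux2.prodA_le_lam l hl (rho α β) hr0 k hk
    have hB := DipoleAux2.prodB_le_exp
      ‖DipoleAux2.Ko m α β * DipoleAux2.Ke m α β - DipoleAux2.Ko m α β‖ hc2n l k hk hl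
    have hBn : (0:ℝ) ≤ ∏ j ∈ Finset.Ico l k,
        (1 + ‖DipoleAux2.Ko m α β * DipoleAux2.Ke m α β - DipoleAux2.Ko m α β‖
          * ((2 * (j : ℝ) + 1)⁻¹ * (2 * (j : ℝ) + 2)⁻¹)) := by
      apply Finset.prod_nonneg
      intro j _
      have hu : (0:ℝ) ≤ (2 * (j : ℝ) + 1)⁻¹ * (2 * (j : ℝ) + 2)⁻¹ := by positivity
      nlinarith
    have hlam1 : (1:ℝ) ≤ lam l k (rho α β) := DipoleAux2.lam_ge_one l k hl _ hr0
    have hfinal : ‖((Pmat m)ᵀ * Pimat m α β i (2 * k) * Pmat m) * DipoleAux2.Zm m‖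
        ≤ ((1 + ‖DipoleAux2.Ko m α β‖) * (1 + ‖DipoleAux2.Ke m α β‖)
            * Real.exp ‖DipoleAux2.Ko m α β * DipoleAux2.Ke m α β - DipoleAux2.Ko m α β‖)
          * lam l k (rho α β) := by
      rw [hGm]
      refine hnorm.trans ?_
      rw [hprod]
      have hmul := mul_le_mul hA hB hBn (le_trans zero_le_one hlam1)
      calc (1 + ‖DipoleAux2.Ko m α β‖) * (1 + ‖DipoleAux2.Ke m α β‖)
            * ((∏ j ∈ Finset.Ico l k, (1 + 2 * rho α β * (2 * (j : ℝ) + 1)⁻¹))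
              * (∏ j ∈ Finset.Ico l k,
                  (1 + ‖DipoleAux2.Ko m α β * DipoleAux2.Ke m α β - DipoleAux2.Ko m α β‖
                    * ((2 * (j : ℝ) + 1)⁻¹ * (2 * (j : ℝ) + 2)⁻¹))))
          ≤ (1 + ‖DipoleAux2.Ko m α β‖) * (1 + ‖DipoleAux2.Ke m α β‖)
            * (lam l k (rho α β)
              * Real.exp ‖DipoleAux2.Ko m α β * DipoleAux2.Ke m α β - DipoleAux2.Ko m α β‖) := by
            apply mul_le_mul_of_nonneg_left hmul
            nlinarith
        _ = ((1 + ‖DipoleAux2.Ko m α β‖) * (1 + ‖DipoleAux2.Ke m α β‖)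
            * Real.exp ‖DipoleAux2.Ko m α β * DipoleAux2.Ke m α β - DipoleAux2.Ko m α β‖)
          * lam l k (rho α β) := by ring
    have htrE : 0 ≤ Matrix.trace E := DipoleAux2.trace_nonneg' E hpsd
    have hsq : ‖((Pmat m)ᵀ * Pimat m α β i (2 * k) * Pmat m) * DipoleAux2.Zm m‖ ^ 2
        ≤ (((1 + ‖DipoleAux2.Ko m α β‖) * (1 + ‖DipoleAux2.Ke m α β‖)
            * Real.exp ‖DipoleAux2.Ko m α β * DipoleAux2.Ke m α β - DipoleAux2.Ko m α β‖)
          * lam l k (rho α β)) ^ 2 :=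
      pow_le_pow_left₀ (norm_nonneg _) hfinal 2
    calc ‖((Pmat m)ᵀ * Pimat m α β i (2 * k) * Pmat m) * DipoleAux2.Zm m‖ ^ 2
          * Matrix.trace E
        ≤ (((1 + ‖DipoleAux2.Ko m α β‖) * (1 + ‖DipoleAux2.Ke m α β‖)
            * Real.exp ‖DipoleAux2.Ko m α β * DipoleAux2.Ke m α β - DipoleAux2.Ko m α β‖)
          * lam l k (rho α β)) ^ 2 * Matrix.trace E :=
          mul_le_mul_of_nonneg_right hsq htrE
      _ = ((1 + ‖DipoleAux2.Ko m α β‖) * (1 + ‖DipoleAux2.Ke m α β‖)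
            * Real.exp ‖DipoleAux2.Ko m α β * DipoleAux2.Ke m α β - DipoleAux2.Ko m α β‖) ^ 2
          * lam l k (rho α β) ^ 2 * Matrix.trace E := by ring
end
end
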